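/- arXiv:1602.06704 — 7 statements merged into one kernel-verified Lean document; each statement's English description precedes it below -/
import Mathlib

section
/- Let r ≥ 1, let x_1,…,x_r ∈ ℂ with |x_j| < 1 for all j, and let 𝒪 ∈ ℂ with |𝒪| < 1. Then the infinite product over all multipartite indices k⃗ = (k_1,…,k_r) ∈ ℕ^r of the factors (1 − 𝒪 x_1^{k_1} x_2^{k_2} ⋯ x_r^{k_r})^{−1} converges (the family is multipliable, and each factor is nonzero), the series ∑_{m≥1} (𝒪^m/m) ∏_{j=1}^r (1 − x_j^m)^{−1} converges absolutely, and ∏_{k⃗∈ℕ^r} (1 − 𝒪 x_1^{k_1}⋯x_r^{k_r})^{−1} = exp( ∑_{m=1}^∞ (𝒪^m/m) ∏_{j=1}^r (1 − x_j^m)^{−1} ). -/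
set_option maxHeartbeats 2000000
open Finset

lemma pi_geom_hasSum : ∀ (n : ℕ) (g : Fin n → ℂ), (∀ j, ‖g j‖ < 1) →
    HasSum (fun k : Fin n → ℕ => ∏ j, g j ^ k j) (∏ j, (1 - g j)⁻¹) ∧
    Summable (fun k : Fin n → ℕ => ‖∏ j, g j ^ k j‖) := by
  intro n
  induction n with
  | zero =>
    intro g hg
    constructor
    · have : HasSum (fun k : Fin 0 → ℕ => ∏ j, g j ^ k j)
          ((fun k : Fin 0 → ℕ => ∏ j, g j ^ k j) default) := by
        apply hasSum_single default
        intro b hb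
        exact absurd (Subsingleton.elim b default) hb
      simpa using this
    · exact summable_of_finite_support (Set.toFinite _)
  | succ n ih =>
    intro g hg
    set e := Fin.consEquiv (fun _ : Fin (n+1) => ℕ) with he
    obtain ⟨ihS, ihN⟩ := ih (fun j => g j.succ) (fun j => hg j.succ)
    have hgeom := hasSum_geometric_of_norm_lt_one (hg 0)
    have hgeomN : Summable (fun m : ℕ => ‖g 0 ^ m‖) := by
      simpa [norm_pow] using summable_geometric_of_lt_one (norm_nonneg (g 0)) (hg 0)
    have hNprod : Summable (fun p : ℕ × (Fin n → ℕ) =>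
        ‖(g 0 ^ p.1) * ∏ j, g j.succ ^ p.2 j‖) :=
      Summable.mul_norm (f := fun m : ℕ => g 0 ^ m)
        (g := fun k : Fin n → ℕ => ∏ j, g j.succ ^ k j) hgeomN ihN
    have hSprod : HasSum (fun p : ℕ × (Fin n → ℕ) =>
        (g 0 ^ p.1) * ∏ j, g j.succ ^ p.2 j)
        ((1 - g 0)⁻¹ * ∏ j : Fin n, (1 - g (Fin.succ j))⁻¹) :=
      HasSum.mul (f := fun m : ℕ => g 0 ^ m)
        (g := fun k : Fin n → ℕ => ∏ j : Fin n, g (Fin.succ j) ^ k j) hgeom ihS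
        (Summable.of_norm hNprod)
    have key : ∀ p : ℕ × (Fin n → ℕ),
        (∏ j, g j ^ (e p) j) = (g 0 ^ p.1) * ∏ j, g j.succ ^ p.2 j := by
      intro p
      rw [Fin.prod_univ_succ]
      simp [he, Fin.consEquiv]
    constructor
    · rw [← Equiv.hasSum_iff e]
      have : HasSum (fun p : ℕ × (Fin n → ℕ) => ∏ j, g j ^ (e p) j)
          ((1 - g 0)⁻¹ * ∏ j : Fin n, (1 - g (Fin.succ j))⁻¹) :=
        hSprod.congr_fun (fun p => key p)
      convert this using 1
      · rfl
      rw [Fin.prod_univ_succ]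
    · rw [← Equiv.summable_iff e]
      exact hNprod.congr (fun p => by rw [Function.comp_apply, key p])

/-- The multipartite generating function identity
`∏_{k⃗∈ℕ^r} (1 − 𝒪 x_1^{k_1}⋯x_r^{k_r})^{−1}
  = exp( ∑_{m=1}^∞ (𝒪^m/m) ∏_{j=1}^r (1 − x_j^m)^{−1} )`,
together with the asserted convergence statements. -/
theorem multipartite_generating_function_F
    (r : ℕ) (hr : 1 ≤ r) (x : Fin r → ℂ) (hx : ∀ j, ‖x j‖ < 1)
    (O : ℂ) (hO : ‖O‖ < 1) :
    (Multipliable fun k : Fin r → ℕ => (1 - O * ∏ j, x j ^ k j)⁻¹)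
    ∧ (∀ k : Fin r → ℕ, 1 - O * ∏ j, x j ^ k j ≠ 0)
    ∧ (Summable fun m : ℕ =>
        ‖O ^ (m + 1) / ((m : ℂ) + 1) * ∏ j, (1 - x j ^ (m + 1))⁻¹‖)
    ∧ (∏' k : Fin r → ℕ, (1 - O * ∏ j, x j ^ k j)⁻¹
        = Complex.exp
            (∑' m : ℕ, O ^ (m + 1) / ((m : ℂ) + 1) * ∏ j, (1 - x j ^ (m + 1))⁻¹)) := by
  set z : (Fin r → ℕ) → ℂ := fun k => ∏ j, x j ^ k j with hzdef
  -- basic norm facts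
  have hzN : Summable fun k => ‖z k‖ := (pi_geom_hasSum r x hx).2
  have hz_le : ∀ k, ‖z k‖ ≤ 1 := by
    intro k
    rw [hzdef]
    simp only [norm_prod]
    apply Finset.prod_le_one
    · intro j _; positivity
    · intro j _
      rw [norm_pow]
      exact pow_le_one₀ (norm_nonneg _) (hx j).le
  have hOz_le : ∀ k, ‖O * z k‖ ≤ ‖O‖ := by
    intro k; rw [norm_mul]
    exact mul_le_of_le_one_right (norm_nonneg _) (hz_le k)
  have hOz_lt : ∀ k, ‖O * z k‖ < 1 := fun k => lt_of_le_of_lt (hOz_le k) hO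
  have hne : ∀ k, 1 - O * z k ≠ 0 := by
    intro k
    apply sub_ne_zero_of_ne
    intro h
    have h2 := hOz_lt k
    rw [← h] at h2
    simp at h2
  -- summability of the logs
  have hlog : Summable fun k => Complex.log (1 - O * z k) := by
    apply Summable.of_norm_bounded (g := fun k => (((1 - ‖O‖)⁻¹ / 2 + 1) * ‖O‖) * ‖z k‖)
      (hzN.mul_left _)
    intro k
    have h1 : ‖-(O * z k)‖ < 1 := by simpa using hOz_lt k
    have h2 := Complex.norm_log_one_add_le h1
    rw [← sub_eq_add_neg] at h2
    refine h2.trans ?_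
    rw [norm_neg]
    set t := ‖O * z k‖ with ht
    have htle : t ≤ ‖O‖ := hOz_le k
    have htnn : 0 ≤ t := norm_nonneg _
    have hO1 : 0 < 1 - ‖O‖ := by linarith
    have hinv : (1 - t)⁻¹ ≤ (1 - ‖O‖)⁻¹ := by
      apply inv_anti₀ hO1; linarith
    have hmul : t = ‖O‖ * ‖z k‖ := norm_mul O (z k)
    have ht1 : t < 1 := hOz_lt k
    have hinvnn : 0 ≤ (1 - t)⁻¹ := inv_nonneg.2 (by linarith)
    have key : t ^ 2 * (1 - t)⁻¹ / 2 + t ≤ ((1 - ‖O‖)⁻¹ / 2 + 1) * t := by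
      have h3 : t * (1 - t)⁻¹ ≤ (1 - ‖O‖)⁻¹ := by
        calc t * (1 - t)⁻¹ ≤ 1 * (1 - ‖O‖)⁻¹ := by
              apply mul_le_mul ht1.le hinv hinvnn zero_le_one
          _ = (1 - ‖O‖)⁻¹ := one_mul _
      nlinarith
    calc t ^ 2 * (1 - t)⁻¹ / 2 + t ≤ ((1 - ‖O‖)⁻¹ / 2 + 1) * t := key
      _ = ((1 - ‖O‖)⁻¹ / 2 + 1) * ‖O‖ * ‖z k‖ := by rw [hmul, mul_assoc]
  -- arg condition and log of inverse
  have harg : ∀ k, Complex.log ((1 - O * z k)⁻¹) = -Complex.log (1 - O * z k) := by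
    intro k
    apply Complex.log_inv
    apply Complex.slitPlane_arg_ne_pi
    have h1 : ‖-(O * z k)‖ < 1 := by simpa using hOz_lt k
    have := Complex.mem_slitPlane_of_norm_lt_one h1
    rwa [← sub_eq_add_neg] at this
  have hloginv : Summable fun k => Complex.log ((1 - O * z k)⁻¹) := by
    apply (hlog.neg).congr
    intro k; exact (harg k).symm
  -- multipliability
  have hmult : Multipliable fun k : Fin r → ℕ => (1 - O * z k)⁻¹ := by
    exact Complex.multipliable_of_summable_log hloginv
  -- Taylor series for each k
  have htay : ∀ k, HasSum (fun m : ℕ => (O * z k) ^ (m + 1) / ((m : ℂ) + 1))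
      (-Complex.log (1 - O * z k)) := by
    intro k
    have h := Complex.hasSum_taylorSeries_neg_log (hOz_lt k)
    have h2 := (hasSum_nat_add_iff' (f := fun n : ℕ => (O * z k) ^ n / (n : ℂ)) 1).2 h
    simp only [Finset.range_one, Finset.sum_singleton, pow_zero, Nat.cast_zero, div_zero,
      sub_zero] at h2
    convert h2 using 2 with m
    · rfl
    push_cast
    ring
  -- uncurried summability for the swap
  set F : (Fin r → ℕ) → ℕ → ℂ := fun k m => (O * z k) ^ (m + 1) / ((m : ℂ) + 1) with hF
  have hFsummable : Summable (Function.uncurry F) := by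
    apply Summable.of_norm_bounded (g := fun p : (Fin r → ℕ) × ℕ => (‖O‖ * ‖z p.1‖) * ‖O‖ ^ p.2)
    · exact Summable.mul_of_nonneg (f := fun k : Fin r → ℕ => ‖O‖ * ‖z k‖)
        (g := fun m : ℕ => ‖O‖ ^ m) (hzN.mul_left ‖O‖)
        (summable_geometric_of_lt_one (norm_nonneg O) hO)
        (fun k => by positivity) (fun m => by positivity)
    · rintro ⟨k, m⟩
      have h1 : ‖Function.uncurry F (k, m)‖ = ‖O * z k‖ ^ (m + 1) / ‖((m : ℂ) + 1)‖ := by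
        simp [hF, Function.uncurry, norm_div, norm_pow]
      have h2 : (1 : ℝ) ≤ ‖((m : ℂ) + 1)‖ := by
        have : ((m : ℂ) + 1) = ((m + 1 : ℕ) : ℂ) := by push_cast; ring
        rw [this, Complex.norm_natCast]
        exact_mod_cast Nat.one_le_iff_ne_zero.2 (Nat.succ_ne_zero m)
      have h3 : ‖O * z k‖ ^ (m + 1) / ‖((m : ℂ) + 1)‖ ≤ ‖O * z k‖ ^ (m + 1) := by
        apply div_le_self (by positivity) h2
      have h4 : ‖O * z k‖ ^ (m + 1) ≤ (‖O‖ * ‖z k‖) * ‖O‖ ^ m := by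
        rw [pow_succ', norm_mul]
        gcongr
        exact mul_le_of_le_one_right (norm_nonneg _) (hz_le k)
      calc ‖Function.uncurry F (k, m)‖ ≤ ‖O * z k‖ ^ (m + 1) := by rw [h1]; exact h3
        _ ≤ (‖O‖ * ‖z k‖) * ‖O‖ ^ m := h4
  -- inner sums over k for fixed m
  have hinner : ∀ m : ℕ, HasSum (fun k => F k m)
      (O ^ (m + 1) / ((m : ℂ) + 1) * ∏ j, (1 - x j ^ (m + 1))⁻¹) := by
    intro m
    have hxm : ∀ j, ‖x j ^ (m + 1)‖ < 1 := by
      intro j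
      rw [norm_pow]
      exact pow_lt_one₀ (norm_nonneg _) (hx j) (Nat.succ_ne_zero m)
    have hS := (pi_geom_hasSum r (fun j => x j ^ (m + 1)) hxm).1
    have hS2 : HasSum (fun k => z k ^ (m + 1)) (∏ j, (1 - x j ^ (m + 1))⁻¹) := by
      apply hS.congr_fun
      intro k
      rw [hzdef]
      simp only []
      rw [← Finset.prod_pow]
      exact Finset.prod_congr rfl (fun j _ => (pow_right_comm (x j) (m + 1) (k j)).symm)
    have := hS2.mul_left (O ^ (m + 1) / ((m : ℂ) + 1))
    apply this.congr_fun
    intro k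
    rw [hF]
    simp only []
    rw [mul_pow]
    ring
  -- third conjunct: summability of the norms of the series terms
  have hsum3 : Summable fun m : ℕ =>
      ‖O ^ (m + 1) / ((m : ℂ) + 1) * ∏ j, (1 - x j ^ (m + 1))⁻¹‖ := by
    refine Summable.of_nonneg_of_le (f := fun m : ℕ => (‖O‖ * ∏ j, (1 - ‖x j‖)⁻¹) * ‖O‖ ^ m)
      (fun m => norm_nonneg _) ?_
      ((summable_geometric_of_lt_one (norm_nonneg O) hO).mul_left _)
    · intro m
      have h2 : (1 : ℝ) ≤ ‖((m : ℂ) + 1)‖ := by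
        have : ((m : ℂ) + 1) = ((m + 1 : ℕ) : ℂ) := by push_cast; ring
        rw [this, Complex.norm_natCast]
        exact_mod_cast Nat.one_le_iff_ne_zero.2 (Nat.succ_ne_zero m)
      have hfac : ∀ j : Fin r, ‖(1 - x j ^ (m + 1))⁻¹‖ ≤ (1 - ‖x j‖)⁻¹ := by
        intro j
        rw [norm_inv]
        have hxj1 : (0:ℝ) < 1 - ‖x j‖ := by have := hx j; linarith
        apply inv_anti₀ hxj1
        have h5 : ‖x j ^ (m+1)‖ ≤ ‖x j‖ := by
          rw [norm_pow]
          exact pow_le_of_le_one (norm_nonneg _) (hx j).le (Nat.succ_ne_zero m)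
        have h6 := norm_sub_norm_le (1 : ℂ) (x j ^ (m+1))
        simp only [norm_one] at h6
        linarith
      calc ‖O ^ (m + 1) / ((m : ℂ) + 1) * ∏ j, (1 - x j ^ (m + 1))⁻¹‖
          = ‖O‖ ^ (m + 1) / ‖((m : ℂ) + 1)‖ * ∏ j, ‖(1 - x j ^ (m + 1))⁻¹‖ := by
            rw [norm_mul, norm_div, norm_pow, norm_prod]
        _ ≤ ‖O‖ ^ (m + 1) * ∏ j, (1 - ‖x j‖)⁻¹ := by
            apply mul_le_mul
            · exact div_le_self (by positivity) h2
            · apply Finset.prod_le_prod (fun j _ => norm_nonneg _) (fun j _ => hfac j)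
            · positivity
            · positivity
        _ = (‖O‖ * ∏ j, (1 - ‖x j‖)⁻¹) * ‖O‖ ^ m := by ring
  refine ⟨hmult, hne, hsum3, ?_⟩
  -- the main identity
  have hprod : ∏' k : Fin r → ℕ, (1 - O * z k)⁻¹
      = Complex.exp (∑' k, Complex.log ((1 - O * z k)⁻¹)) := by
    have := Complex.cexp_tsum_eq_tprod (f := fun k => (1 - O * z k)⁻¹)
      (fun k => inv_ne_zero (hne k)) hloginv
    exact this.symm
  rw [hprod]
  congr 1
  calc ∑' k, Complex.log ((1 - O * z k)⁻¹)
      = ∑' k, -Complex.log (1 - O * z k) := tsum_congr harg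
    _ = ∑' (k) (m), F k m := tsum_congr (fun k => ((htay k).tsum_eq).symm)
    _ = ∑' (m) (k), F k m := (Summable.tsum_comm' hFsummable
        (fun k => ((htay k).summable)) (fun m => (hinner m).summable)).symm
    _ = ∑' m : ℕ, O ^ (m + 1) / ((m : ℂ) + 1) * ∏ j, (1 - x j ^ (m + 1))⁻¹ :=
        tsum_congr (fun m => (hinner m).tsum_eq)
end

section
/- Let r ≥ 1, let x_1,…,x_r ∈ ℂ with |x_j| < 1 for all j, and let 𝒪 ∈ ℂ with |𝒪| < 1. Then the infinite product over all multipartite indices k⃗ = (k_1,…,k_r) ∈ ℕ^r of the factors (1 + 𝒪 x_1^{k_1} x_2^{k_2} ⋯ x_r^{k_r}) converges (the family is multipliable), the series ∑_{m≥1} ((−𝒪)^m/m) ∏_{j=1}^r (1 − x_j^m)^{−1} converges absolutely, and ∏_{k⃗∈ℕ^r} (1 + 𝒪 x_1^{k_1}⋯x_r^{k_r}) = exp( −∑_{m=1}^∞ ((−𝒪)^m/m) ∏_{j=1}^r (1 − x_j^m)^{−1} ). -/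
open Finset

set_option maxHeartbeats 1000000 in
private lemma hasSum_pi_prod {𝕜 : Type*} [NormedCommRing 𝕜] [CompleteSpace 𝕜] :
    ∀ {r : ℕ} (f : Fin r → ℕ → 𝕜), (∀ j, Summable fun n => ‖f j n‖) →
    HasSum (fun k : Fin r → ℕ => ∏ j, f j (k j)) (∏ j, ∑' n, f j n) ∧
    Summable (fun k : Fin r → ℕ => ‖∏ j, f j (k j)‖) := by
  intro r
  induction r with
  | zero =>
      intro f _
      constructor
      · have h1 : HasSum (fun _ : Fin 0 → ℕ => (1:𝕜)) 1 := by
          have := hasSum_single (f := fun _ : Fin 0 → ℕ => (1:𝕜)) (fun _ => 0)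
            (fun b hb => absurd (Subsingleton.elim b _) hb)
          simpa using this
        simpa using h1
      · have h1 : Summable (fun _ : Fin 0 → ℕ => ‖(1:𝕜)‖) := by
          apply summable_of_finite_support
          exact Set.toFinite _
        simpa using h1
  | succ r ih =>
      intro f hf
      obtain ⟨ihS, ihN⟩ := ih (fun j => f j.succ) (fun j => hf j.succ)
      have hmulsum := Summable.mul_norm (hf 0) ihN
      have hS2 := hmulsum.of_norm
      have hmul := HasSum.mul ((hf 0).of_norm.hasSum) ihS hS2
      have heq : ((fun k : Fin (r+1) → ℕ => ∏ j, f j (k j)) ∘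
          (Fin.consEquiv fun _ : Fin (r+1) => ℕ))
          = fun p : ℕ × (Fin r → ℕ) => f 0 p.1 * ∏ j, f j.succ (p.2 j) := by
        funext p
        simp [Fin.prod_univ_succ]
      constructor
      · refine (Equiv.hasSum_iff (Fin.consEquiv fun _ : Fin (r+1) => ℕ)).1 ?_
        rw [heq, Fin.prod_univ_succ]
        exact hmul
      · refine ((Fin.consEquiv fun _ : Fin (r+1) => ℕ).summable_iff).1 ?_
        have heq2 : ((fun k : Fin (r+1) → ℕ => ‖∏ j, f j (k j)‖) ∘
            (Fin.consEquiv fun _ : Fin (r+1) => ℕ))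
            = fun p : ℕ × (Fin r → ℕ) => ‖f 0 p.1 * ∏ j, f j.succ (p.2 j)‖ := by
          funext p
          simp [Fin.prod_univ_succ]
        rw [heq2]
        exact hmulsum

set_option maxHeartbeats 1600000 in
/-- The multipartite generating function identity
`∏_{k⃗∈ℕ^r} (1 + 𝒪 x_1^{k_1}⋯x_r^{k_r})
  = exp( −∑_{m=1}^∞ ((−𝒪)^m/m) ∏_{j=1}^r (1 − x_j^m)^{−1} )`,
together with the asserted convergence statements. -/
theorem multipartite_generating_function_G
    (r : ℕ) (hr : 1 ≤ r) (x : Fin r → ℂ) (hx : ∀ j, ‖x j‖ < 1)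
    (O : ℂ) (hO : ‖O‖ < 1) :
    (Multipliable fun k : Fin r → ℕ => 1 + O * ∏ j, x j ^ k j)
    ∧ (Summable fun m : ℕ =>
        ‖(-O) ^ (m + 1) / ((m : ℂ) + 1) * ∏ j, (1 - x j ^ (m + 1))⁻¹‖)
    ∧ (∏' k : Fin r → ℕ, (1 + O * ∏ j, x j ^ k j)
        = Complex.exp
            (-∑' m : ℕ, (-O) ^ (m + 1) / ((m : ℂ) + 1) * ∏ j, (1 - x j ^ (m + 1))⁻¹)) := by
  have hxa : ∀ j, (0:ℝ) ≤ ‖x j‖ := fun j => norm_nonneg _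
  have hOq : (0:ℝ) < 1 - ‖O‖ := by linarith
  set a : (Fin r → ℕ) → ℂ := fun k => O * ∏ j, x j ^ k j with ha_def
  -- norms
  have hnorm_a : ∀ k, ‖a k‖ = ‖O‖ * ∏ j, ‖x j‖ ^ k j := by
    intro k
    simp [ha_def, norm_prod]
  have hprod_le_one : ∀ k : Fin r → ℕ, (∏ j, ‖x j‖ ^ k j) ≤ 1 := by
    intro k
    apply Finset.prod_le_one
    · exact fun j _ => pow_nonneg (hxa j) _
    · exact fun j _ => pow_le_one₀ (hxa j) (hx j).le
  have ha_le : ∀ k, ‖a k‖ ≤ ‖O‖ := by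
    intro k
    rw [hnorm_a]
    exact mul_le_of_le_one_right (norm_nonneg O) (hprod_le_one k)
  have ha_lt1 : ∀ k, ‖a k‖ < 1 := fun k => lt_of_le_of_lt (ha_le k) hO
  have hne : ∀ k, 1 + a k ≠ 0 := by
    intro k h
    have h2 : a k = -1 := by linear_combination h
    have := ha_lt1 k
    rw [h2] at this
    simp at this
  -- geometric summability for each coordinate
  have hgeo : ∀ j : Fin r, Summable fun n : ℕ => ‖(x j) ^ n‖ := by
    intro j
    simpa only [norm_pow] using summable_geometric_of_lt_one (hxa j) (hx j)
  obtain ⟨hP, hPnorm⟩ := hasSum_pi_prod (fun j n => x j ^ n) hgeo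
  have ha_sum : Summable fun k : Fin r → ℕ => ‖a k‖ := by
    have := hPnorm.mul_left ‖O‖
    refine this.congr fun k => ?_
    rw [hnorm_a]
    congr 1
    rw [norm_prod]
    exact Finset.prod_congr rfl fun j _ => norm_pow _ _
  -- summability of the logarithms
  have hlog_sum : Summable fun k : Fin r → ℕ => Complex.log (1 + a k) := by
    apply Summable.of_norm
    refine Summable.of_nonneg_of_le (fun k => norm_nonneg _) ?_
      (ha_sum.mul_left (‖O‖ * (1 - ‖O‖)⁻¹ / 2 + 1))
    intro k
    have h1 : ‖Complex.log (1 + a k)‖ ≤ ‖a k‖ ^ 2 * (1 - ‖a k‖)⁻¹ / 2 + ‖a k‖ :=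
      Complex.norm_log_one_add_le (ha_lt1 k)
    have h2 : (1 - ‖a k‖)⁻¹ ≤ (1 - ‖O‖)⁻¹ := by
      apply inv_anti₀ hOq
      linarith [ha_le k]
    have h3 : ‖a k‖ * (1 - ‖a k‖)⁻¹ ≤ ‖O‖ * (1 - ‖O‖)⁻¹ :=
      mul_le_mul (ha_le k) h2 (inv_nonneg.2 (by linarith [ha_lt1 k])) (norm_nonneg O)
    nlinarith [norm_nonneg (a k), h1, h3]
  -- multipliability and the exp-log identity
  have hmult : Multipliable fun k : Fin r → ℕ => 1 + a k :=
    Complex.multipliable_of_summable_log hlog_sum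
  have hexp : Complex.exp (∑' k : Fin r → ℕ, Complex.log (1 + a k))
      = ∏' k : Fin r → ℕ, (1 + a k) :=
    Complex.cexp_tsum_eq_tprod hne hlog_sum
  -- norms of natural numbers
  have hnat : ∀ n : ℕ, (1:ℝ) ≤ ‖((n:ℂ) + 1)‖ := by
    intro n
    have h : ((n:ℂ) + 1) = ((n+1 : ℕ) : ℂ) := by push_cast; ring
    rw [h, Complex.norm_natCast]
    exact_mod_cast Nat.succ_le_succ (Nat.zero_le n)
  -- the double-indexed family
  have hFbound : ∀ (k : Fin r → ℕ) (n : ℕ),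
      ‖(-1:ℂ)^n * (a k)^(n+1) / ((n:ℂ)+1)‖ ≤ ‖a k‖ * ‖a k‖^n := by
    intro k n
    rw [norm_div, norm_mul, norm_pow, norm_pow, norm_neg, norm_one, one_pow, one_mul]
    calc ‖a k‖^(n+1) / ‖((n:ℂ)+1)‖ ≤ ‖a k‖^(n+1) :=
          div_le_self (pow_nonneg (norm_nonneg _) _) (hnat n)
      _ = ‖a k‖ * ‖a k‖^n := by ring
  have hFnormRow : ∀ k : Fin r → ℕ,
      Summable fun n : ℕ => ‖(-1:ℂ)^n * (a k)^(n+1) / ((n:ℂ)+1)‖ := by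
    intro k
    exact Summable.of_nonneg_of_le (fun n => norm_nonneg _) (hFbound k)
      ((summable_geometric_of_lt_one (norm_nonneg _) (ha_lt1 k)).mul_left _)
  have hrowsum_le : ∀ k : Fin r → ℕ,
      (∑' n : ℕ, ‖(-1:ℂ)^n * (a k)^(n+1) / ((n:ℂ)+1)‖) ≤ (1 - ‖O‖)⁻¹ * ‖a k‖ := by
    intro k
    have hgsum : Summable fun n : ℕ => ‖a k‖ * ‖a k‖^n :=
      (summable_geometric_of_lt_one (norm_nonneg _) (ha_lt1 k)).mul_left _
    calc (∑' n : ℕ, ‖(-1:ℂ)^n * (a k)^(n+1) / ((n:ℂ)+1)‖)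
        ≤ ∑' n : ℕ, ‖a k‖ * ‖a k‖^n := Summable.tsum_le_tsum (hFbound k) (hFnormRow k) hgsum
      _ = ‖a k‖ * (1 - ‖a k‖)⁻¹ := by
          rw [tsum_mul_left, tsum_geometric_of_lt_one (norm_nonneg _) (ha_lt1 k)]
      _ ≤ (1 - ‖O‖)⁻¹ * ‖a k‖ := by
          calc ‖a k‖ * (1 - ‖a k‖)⁻¹ ≤ ‖a k‖ * (1 - ‖O‖)⁻¹ :=
                mul_le_mul_of_nonneg_left
                  (inv_anti₀ hOq (by linarith [ha_le k])) (norm_nonneg _)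
            _ = (1 - ‖O‖)⁻¹ * ‖a k‖ := mul_comm _ _
  have hFnorm : Summable fun p : (Fin r → ℕ) × ℕ =>
      ‖(-1:ℂ)^p.2 * (a p.1)^(p.2+1) / ((p.2:ℂ)+1)‖ := by
    refine (summable_prod_of_nonneg (fun p => norm_nonneg _)).2 ⟨hFnormRow, ?_⟩
    refine Summable.of_nonneg_of_le (fun k => tsum_nonneg fun n => norm_nonneg _)
      hrowsum_le (ha_sum.mul_left _)
  have hF : Summable fun p : (Fin r → ℕ) × ℕ =>
      (-1:ℂ)^p.2 * (a p.1)^(p.2+1) / ((p.2:ℂ)+1) := hFnorm.of_norm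
  -- row sums: Taylor series of log
  have hrow : ∀ k : Fin r → ℕ,
      HasSum (fun n : ℕ => (-1:ℂ)^n * (a k)^(n+1) / ((n:ℂ)+1)) (Complex.log (1 + a k)) := by
    intro k
    have h := Complex.hasSum_taylorSeries_log (ha_lt1 k)
    have h1 := (hasSum_nat_add_iff'
      (f := fun n : ℕ => (-1:ℂ)^(n+1) * (a k)^n / (n:ℂ)) 1).2 h
    simp only [Finset.range_one, Finset.sum_singleton, Nat.cast_zero, pow_zero,
      div_zero, sub_zero, mul_one] at h1
    have hfun : (fun n : ℕ => (-1:ℂ)^(n+1+1) * (a k)^(n+1) / ((n+1 : ℕ):ℂ))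
        = fun n : ℕ => (-1:ℂ)^n * (a k)^(n+1) / ((n:ℂ)+1) := by
      funext n
      push_cast
      rw [pow_succ, pow_succ]
      ring
    rwa [hfun] at h1
  -- column sums: geometric series in each coordinate
  have hcol : ∀ n : ℕ, HasSum (fun k : Fin r → ℕ => (-1:ℂ)^n * (a k)^(n+1) / ((n:ℂ)+1))
      (-((-O)^(n+1) / ((n:ℂ)+1) * ∏ j, (1 - x j ^ (n+1))⁻¹)) := by
    intro n
    have hlt : ∀ j : Fin r, ‖x j ^ (n+1)‖ < 1 := by
      intro j
      rw [norm_pow]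
      exact pow_lt_one₀ (hxa j) (hx j) (Nat.succ_ne_zero n)
    have hgeo2 : ∀ j : Fin r, Summable fun m : ℕ => ‖(x j ^ (n+1)) ^ m‖ := by
      intro j
      have h := summable_geometric_of_lt_one (norm_nonneg (x j ^ (n+1))) (hlt j)
      simpa only [norm_pow] using h
    obtain ⟨hps, -⟩ := hasSum_pi_prod (fun j m => (x j ^ (n+1)) ^ m) hgeo2
    have hval : (∏ j, ∑' m : ℕ, (x j ^ (n+1)) ^ m) = ∏ j, (1 - x j ^ (n+1))⁻¹ :=
      Finset.prod_congr rfl fun j _ => tsum_geometric_of_norm_lt_one (hlt j)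
    have hm := hps.mul_left ((-1:ℂ)^n * O^(n+1) / ((n:ℂ)+1))
    rw [hval] at hm
    have hfun : (fun k : Fin r → ℕ =>
        ((-1:ℂ)^n * O^(n+1) / ((n:ℂ)+1)) * ∏ j, (x j ^ (n+1)) ^ (k j))
        = fun k : Fin r → ℕ => (-1:ℂ)^n * (a k)^(n+1) / ((n:ℂ)+1) := by
      funext k
      have hpp : (∏ j, x j ^ k j)^(n+1) = ∏ j, (x j ^ (n+1)) ^ (k j) := by
        rw [← Finset.prod_pow]
        exact Finset.prod_congr rfl fun j _ => pow_right_comm _ _ _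
      rw [ha_def]
      simp only []
      rw [mul_pow, hpp]
      ring
    rw [hfun] at hm
    have hval2 : ((-1:ℂ)^n * O^(n+1) / ((n:ℂ)+1)) * ∏ j, (1 - x j ^ (n+1))⁻¹
        = -((-O)^(n+1) / ((n:ℂ)+1) * ∏ j, (1 - x j ^ (n+1))⁻¹) := by
      rw [neg_pow, pow_succ]
      ring
    rwa [hval2] at hm
  -- swap the order of summation
  have hswap : (∑' k : Fin r → ℕ, Complex.log (1 + a k))
      = -∑' n : ℕ, (-O)^(n+1) / ((n:ℂ)+1) * ∏ j, (1 - x j ^ (n+1))⁻¹ := by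
    have h1 : (∑' k : Fin r → ℕ, Complex.log (1 + a k))
        = ∑' (k : Fin r → ℕ) (n : ℕ), (-1:ℂ)^n * (a k)^(n+1) / ((n:ℂ)+1) :=
      tsum_congr fun k => ((hrow k).tsum_eq).symm
    have h2 : (∑' (k : Fin r → ℕ) (n : ℕ), (-1:ℂ)^n * (a k)^(n+1) / ((n:ℂ)+1))
        = ∑' p : (Fin r → ℕ) × ℕ, (-1:ℂ)^p.2 * (a p.1)^(p.2+1) / ((p.2:ℂ)+1) :=
      (Summable.tsum_prod' hF fun k => (hrow k).summable).symm
    have hFswap : Summable fun q : ℕ × (Fin r → ℕ) =>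
        (-1:ℂ)^q.1 * (a q.2)^(q.1+1) / ((q.1:ℂ)+1) := by
      have := (Equiv.prodComm ℕ (Fin r → ℕ)).summable_iff.2 hF
      exact this
    have h3 : (∑' p : (Fin r → ℕ) × ℕ, (-1:ℂ)^p.2 * (a p.1)^(p.2+1) / ((p.2:ℂ)+1))
        = ∑' q : ℕ × (Fin r → ℕ), (-1:ℂ)^q.1 * (a q.2)^(q.1+1) / ((q.1:ℂ)+1) :=
      ((Equiv.prodComm ℕ (Fin r → ℕ)).tsum_eq _).symm
    have h4 : (∑' q : ℕ × (Fin r → ℕ), (-1:ℂ)^q.1 * (a q.2)^(q.1+1) / ((q.1:ℂ)+1))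
        = ∑' (n : ℕ) (k : Fin r → ℕ), (-1:ℂ)^n * (a k)^(n+1) / ((n:ℂ)+1) :=
      Summable.tsum_prod' hFswap fun n => (hcol n).summable
    have h5 : (∑' (n : ℕ) (k : Fin r → ℕ), (-1:ℂ)^n * (a k)^(n+1) / ((n:ℂ)+1))
        = ∑' n : ℕ, -((-O)^(n+1) / ((n:ℂ)+1) * ∏ j, (1 - x j ^ (n+1))⁻¹) :=
      tsum_congr fun n => (hcol n).tsum_eq
    rw [h1, h2, h3, h4, h5, tsum_neg]
  -- summability of the norms in the statement
  have hsum2 : Summable fun m : ℕ =>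
      ‖(-O)^(m+1) / ((m:ℂ)+1) * ∏ j, (1 - x j ^ (m+1))⁻¹‖ := by
    have hbound : ∀ m : ℕ, ‖(-O)^(m+1) / ((m:ℂ)+1) * ∏ j, (1 - x j ^ (m+1))⁻¹‖
        ≤ ((∏ j, (1 - ‖x j‖)⁻¹) * ‖O‖) * ‖O‖^m := by
      intro m
      have hinv : ∀ j : Fin r, ‖(1 - x j ^ (m+1))⁻¹‖ ≤ (1 - ‖x j‖)⁻¹ := by
        intro j
        rw [norm_inv]
        apply inv_anti₀ (by linarith [hx j])
        calc 1 - ‖x j‖ ≤ 1 - ‖x j ^ (m+1)‖ := by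
              rw [norm_pow]
              have h' : ‖x j‖ ^ (m+1) ≤ ‖x j‖ :=
                pow_le_of_le_one (hxa j) (hx j).le (Nat.succ_ne_zero m)
              linarith
          _ = ‖(1:ℂ)‖ - ‖x j ^ (m+1)‖ := by rw [norm_one]
          _ ≤ ‖1 - x j ^ (m+1)‖ := norm_sub_norm_le _ _
      rw [norm_mul, norm_div, norm_pow, norm_neg, norm_prod]
      calc ‖O‖^(m+1) / ‖((m:ℂ)+1)‖ * ∏ j, ‖(1 - x j ^ (m+1))⁻¹‖
          ≤ ‖O‖^(m+1) * ∏ j, (1 - ‖x j‖)⁻¹ :=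
            mul_le_mul (div_le_self (pow_nonneg (norm_nonneg _) _) (hnat m))
              (Finset.prod_le_prod (fun j _ => norm_nonneg _) (fun j _ => hinv j))
              (Finset.prod_nonneg fun j _ => norm_nonneg _)
              (pow_nonneg (norm_nonneg _) _)
        _ = ((∏ j, (1 - ‖x j‖)⁻¹) * ‖O‖) * ‖O‖^m := by rw [pow_succ]; ring
    exact Summable.of_nonneg_of_le (fun m => norm_nonneg _) hbound
      ((summable_geometric_of_lt_one (norm_nonneg O) hO).mul_left _)
  refine ⟨hmult, hsum2, ?_⟩
  rw [← hexp, hswap]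
end

section
/- Let α > 0 and β ∈ ℝ. For every s ∈ ℂ, the family indexed by (k_1,k_2) ∈ ℕ × ℕ of factors ( 1 − e^{iβ k_1} e^{−iβ k_2} e^{−(k_1+k_2+s)α} ) is multipliable, so the Patterson–Selberg zeta function Z_{Γ}(s) = ∏_{k_1,k_2 ≥ 0} ( 1 − e^{iβ k_1} e^{−iβ k_2} e^{−(k_1+k_2+s)α} ) is well defined for all s ∈ ℂ, and the resulting function Z_{Γ} : ℂ → ℂ is analytic on all of ℂ (entire). -/
open Complex

/-- The Patterson–Selberg zeta function
`Z_Γ(s) = ∏_{k₁,k₂ ≥ 0} (1 − e^{iβk₁} e^{−iβk₂} e^{−(k₁+k₂+s)α})`. -/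
noncomputable def ZPS (α β : ℝ) (s : ℂ) : ℂ :=
  ∏' k : ℕ × ℕ,
    (1 - Complex.exp (Complex.I * β * k.1) * Complex.exp (-(Complex.I * β * k.2)) *
        Complex.exp (-((k.1 : ℂ) + (k.2 : ℂ) + s) * α))

namespace ZPSaux

noncomputable def g (α β : ℝ) (k : ℕ × ℕ) (s : ℂ) : ℂ :=
  Complex.exp (Complex.I * β * k.1) * Complex.exp (-(Complex.I * β * k.2)) *
    Complex.exp (-((k.1 : ℂ) + (k.2 : ℂ) + s) * α)

lemma norm_g (α β : ℝ) (k : ℕ × ℕ) (s : ℂ) :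
    ‖g α β k s‖ = Real.exp (-s.re * α) * Real.exp (-α) ^ k.1 * Real.exp (-α) ^ k.2 := by
  have h1 : (Complex.I * β * k.1).re = 0 := by simp
  have h2 : (-(Complex.I * β * k.2)).re = 0 := by simp
  have h3 : ((-((k.1 : ℂ) + (k.2 : ℂ) + s)) * (α : ℂ)).re
      = -s.re * α + (k.1 : ℝ) * (-α) + (k.2 : ℝ) * (-α) := by
    simp [Complex.mul_re, Complex.add_re, Complex.neg_re]
    ring
  simp only [g, norm_mul, Complex.norm_exp, h1, h2, h3, Real.exp_zero,
    one_mul, Real.exp_add, Real.exp_nat_mul]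

lemma diff_g (α β : ℝ) (k : ℕ × ℕ) : Differentiable ℂ (g α β k) := by
  unfold g
  fun_prop

lemma summable_geom (α : ℝ) (hα : 0 < α) :
    Summable fun k : ℕ × ℕ => Real.exp (-α) ^ k.1 * Real.exp (-α) ^ k.2 := by
  have hr0 : (0 : ℝ) ≤ Real.exp (-α) := (Real.exp_pos _).le
  have hr1 : Real.exp (-α) < 1 := Real.exp_lt_one_iff.mpr (by linarith)
  have h1 : Summable fun n : ℕ => Real.exp (-α) ^ n := summable_geometric_of_lt_one hr0 hr1
  exact h1.mul_of_nonneg h1 (fun n => pow_nonneg hr0 _) (fun n => pow_nonneg hr0 _)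

lemma summable_norm_g (α β : ℝ) (hα : 0 < α) (s : ℂ) :
    Summable fun k : ℕ × ℕ => ‖g α β k s‖ := by
  have := ((summable_geom α hα).mul_left (Real.exp (-s.re * α)))
  exact this.congr fun k => by rw [norm_g]; ring

lemma hasProd_zero_of_eq_zero {ι : Type*} {f : ι → ℂ} (i : ι) (h : f i = 0) : HasProd f 0 := by
  apply (tendsto_const_nhds : Filter.Tendsto (fun _ : Finset ι => (0 : ℂ)) _ _).congr'
  filter_upwards [Filter.eventually_ge_atTop {i}] with t ht
  exact (Finset.prod_eq_zero (ht (Finset.mem_singleton_self i)) h).symm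

lemma multipliable (α β : ℝ) (hα : 0 < α) (s : ℂ) :
    Multipliable fun k : ℕ × ℕ => 1 - g α β k s := by
  by_cases h : ∃ k, 1 - g α β k s = 0
  · obtain ⟨k, hk⟩ := h
    exact ⟨0, hasProd_zero_of_eq_zero k hk⟩
  · push_neg at h
    have hsum : Summable fun k : ℕ × ℕ => Complex.log (1 - g α β k s) :=
      ((summable_norm_g α β hα s).of_norm).clog_one_sub
    exact Complex.multipliable_of_summable_log hsum

lemma entire (α β : ℝ) (hα : 0 < α) (s₀ : ℂ) :
    AnalyticAt ℂ (fun s => ∏' k : ℕ × ℕ, (1 - g α β k s)) s₀ := by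
  set r : ℝ := Real.exp (-α) with hr
  have hr0 : (0 : ℝ) ≤ r := (Real.exp_pos _).le
  have hr1 : r < 1 := Real.exp_lt_one_iff.mpr (by linarith)
  set C : ℝ := Real.exp ((1 - s₀.re) * α) with hC
  have hC0 : 0 < C := Real.exp_pos _
  set U : Set ℂ := Metric.ball s₀ 1 with hU
  have hUopen : IsOpen U := Metric.isOpen_ball
  -- uniform bound on U
  have hbound : ∀ s ∈ U, ∀ k : ℕ × ℕ, ‖g α β k s‖ ≤ C * r ^ (k.1 + k.2) := by
    intro s hs k
    rw [norm_g]
    have h1 : s₀.re - s.re ≤ 1 := by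
      have := Complex.abs_re_le_norm (s₀ - s)
      have h2 : ‖s₀ - s‖ < 1 := by
        rw [← Complex.dist_eq, dist_comm]; exact hs
      have := abs_le.mp (le_of_lt (lt_of_le_of_lt this h2))
      simpa using this.2
    have : Real.exp (-s.re * α) ≤ C := by
      apply Real.exp_le_exp.mpr
      nlinarith
    calc Real.exp (-s.re * α) * r ^ k.1 * r ^ k.2 ≤ C * (r ^ k.1 * r ^ k.2) := by
          rw [mul_assoc]
          exact mul_le_mul_of_nonneg_right this (by positivity)
      _ = C * r ^ (k.1 + k.2) := by rw [pow_add]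
  -- choose N with C * r ^ N < 1/2
  obtain ⟨N, hN⟩ : ∃ N : ℕ, C * r ^ N < 1 / 2 := by
    have h := (tendsto_pow_atTop_nhds_zero_of_lt_one hr0 hr1).const_mul C
    rw [mul_zero] at h
    exact (h.eventually_lt_const (by norm_num)).exists
  set T : Finset (ℕ × ℕ) := Finset.range N ×ˢ Finset.range N with hT
  set S : Set (ℕ × ℕ) := ↑T with hS
  -- small factors off T
  have hsmall : ∀ s ∈ U, ∀ k : ℕ × ℕ, k ∉ T → ‖g α β k s‖ ≤ 1 / 2 := by
    intro s hs k hk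
    have hge : N ≤ k.1 + k.2 := by
      by_contra hlt
      push_neg at hlt
      exact hk (Finset.mem_product.mpr ⟨Finset.mem_range.mpr (by omega),
        Finset.mem_range.mpr (by omega)⟩)
    calc ‖g α β k s‖ ≤ C * r ^ (k.1 + k.2) := hbound s hs k
      _ ≤ C * r ^ N := mul_le_mul_of_nonneg_left (pow_le_pow_of_le_one hr0 hr1.le hge) hC0.le
      _ ≤ 1 / 2 := hN.le
  have hne : ∀ s ∈ U, ∀ k : ℕ × ℕ, k ∉ T → 1 - g α β k s ≠ 0 := by
    intro s hs k hk h
    have := hsmall s hs k hk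
    rw [sub_eq_zero] at h
    rw [← h] at this
    norm_num at this
  have hslit : ∀ s ∈ U, ∀ k : ℕ × ℕ, k ∉ T → (1 - g α β k s) ∈ Complex.slitPlane := by
    intro s hs k hk
    have : (1 : ℂ) - g α β k s = 1 + -(g α β k s) := by ring
    rw [this]
    apply Complex.mem_slitPlane_of_norm_lt_one
    rw [norm_neg]
    exact lt_of_le_of_lt (hsmall s hs k hk) (by norm_num)
  -- the analytic model function
  set F : ℂ → ℂ := fun s =>
    (∏ k ∈ T, (1 - g α β k s)) *
      Complex.exp (∑' k : ↥Sᶜ, Complex.log (1 - g α β (k : ℕ × ℕ) s)) with hF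
  -- differentiability of F on U
  have hdiff_prod : Differentiable ℂ fun s => ∏ k ∈ T, (1 - g α β k s) := by
    classical
    induction T using Finset.induction with
    | empty => simpa using differentiable_const (1 : ℂ)
    | insert a s hk ih =>
      simp only [Finset.prod_insert hk]
      exact ((differentiable_const 1).sub (diff_g α β _)).mul ih
  have hdiff_tsum : DifferentiableOn ℂ
      (fun s => ∑' k : ↥Sᶜ, Complex.log (1 - g α β (k : ℕ × ℕ) s)) U := by
    apply differentiableOn_tsum_of_summable_norm
      (u := fun k : ↥Sᶜ => 3 / 2 * (C * r ^ ((k : ℕ × ℕ).1 + (k : ℕ × ℕ).2)))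
    · have h0 : Summable fun k : ℕ × ℕ => 3 / 2 * (C * r ^ (k.1 + k.2)) :=
        (((summable_geom α hα).mul_left C).congr
          (fun k => by rw [pow_add])).mul_left (3 / 2)
      exact h0.subtype Sᶜ
    · intro k
      apply DifferentiableOn.clog
      · exact ((differentiable_const 1).sub (diff_g α β _)).differentiableOn
      · intro s hs
        exact hslit s hs _ k.2
    · exact hUopen
    · intro k s hs
      have h1 : (1 : ℂ) - g α β (k : ℕ × ℕ) s = 1 + -(g α β (k : ℕ × ℕ) s) := by ring
      rw [h1]
      calc ‖Complex.log (1 + -g α β (k : ℕ × ℕ) s)‖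
          ≤ 3 / 2 * ‖-g α β (k : ℕ × ℕ) s‖ :=
            Complex.norm_log_one_add_half_le_self (by rw [norm_neg]; exact hsmall s hs _ k.2)
        _ ≤ 3 / 2 * (C * r ^ ((k : ℕ × ℕ).1 + (k : ℕ × ℕ).2)) := by
            rw [norm_neg]
            exact mul_le_mul_of_nonneg_left (hbound s hs _) (by norm_num)
  have hFdiff : DifferentiableOn ℂ F U :=
    (hdiff_prod.differentiableOn).mul (hdiff_tsum.cexp)
  -- F agrees with the product on U
  have heq : ∀ s ∈ U, (∏' k : ℕ × ℕ, (1 - g α β k s)) = F s := by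
    intro s hs
    have hsumlog : Summable fun k : ↥Sᶜ => Complex.log (1 - g α β (k : ℕ × ℕ) s) := by
      have := ((summable_norm_g α β hα s).of_norm.subtype Sᶜ).clog_one_sub
      exact this
    have hexp : (fun k : ↥Sᶜ => Complex.exp (Complex.log (1 - g α β (k : ℕ × ℕ) s)))
        = fun k : ↥Sᶜ => 1 - g α β (k : ℕ × ℕ) s :=
      funext fun k => Complex.exp_log (hne s hs _ k.2)
    have hprod : HasProd (fun k : ↥Sᶜ => 1 - g α β (k : ℕ × ℕ) s)
        (Complex.exp (∑' k : ↥Sᶜ, Complex.log (1 - g α β (k : ℕ × ℕ) s))) := by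
      have := hsumlog.hasSum.cexp
      rwa [show Complex.exp ∘ (fun k : ↥Sᶜ => Complex.log (1 - g α β (k : ℕ × ℕ) s))
        = fun k : ↥Sᶜ => 1 - g α β (k : ℕ × ℕ) s from hexp] at this
    have hms : Multipliable fun k : ↥S => 1 - g α β (k : ℕ × ℕ) s := by
      have : Finite ↥S := by rw [hS]; exact T.finite_toSet
      exact Multipliable.of_finite
    have hsplit := Multipliable.tprod_mul_tprod_compl (f := fun k : ℕ × ℕ => 1 - g α β k s) hms hprod.multipliable
    rw [← hsplit, hF, hprod.tprod_eq]
    congr 1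
    exact Finset.tprod_subtype' T (fun k => 1 - g α β k s)
  -- conclude
  have : DifferentiableOn ℂ (fun s => ∏' k : ℕ × ℕ, (1 - g α β k s)) U :=
    hFdiff.congr heq
  exact this.analyticAt (hUopen.mem_nhds (Metric.mem_ball_self one_pos))

end ZPSaux

/-- For `α > 0`, the defining product of the Patterson–Selberg zeta function is
multipliable for every `s ∈ ℂ`, and the resulting function is entire. -/
theorem ZPS_multipliable_and_entire (α β : ℝ) (hα : 0 < α) :
    (∀ s : ℂ, Multipliable fun k : ℕ × ℕ =>
        1 - Complex.exp (Complex.I * β * k.1) * Complex.exp (-(Complex.I * β * k.2)) *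
          Complex.exp (-((k.1 : ℂ) + (k.2 : ℂ) + s) * α))
    ∧ (∀ s : ℂ, AnalyticAt ℂ (ZPS α β) s) := by
  constructor
  · intro s
    exact ZPSaux.multipliable α β hα s
  · intro s
    have := ZPSaux.entire α β hα s
    convert this using 2
    rfl
end

section
/- Let α > 0 and β ∈ ℝ, and let s ∈ ℂ with Re s > 0. Then the series ∑_{n=1}^∞ e^{−nα(s−1)} / ( n·[ sinh²(αn/2) + sin²(βn/2) ] ) converges absolutely, and the Patterson–Selberg zeta function satisfies log Z_{Γ}(s) = −(1/4) ∑_{n=1}^∞ e^{−nα(s−1)} / ( n·[ sinh²(αn/2) + sin²(βn/2) ] ); equivalently Z_{Γ}(s) = exp( −(1/4) ∑_{n=1}^∞ e^{−nα(s−1)} / ( n·[ sinh²(αn/2) + sin²(βn/2) ] ) ). -/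
open Complex

/-- The real quantity `n·(sinh²(αn/2) + sin²(βn/2))`, viewed in `ℂ`. -/
noncomputable def psDenom (α β : ℝ) (n : ℕ) : ℂ :=
  ((n : ℝ) * ((Real.sinh (α * n / 2)) ^ 2 + (Real.sin (β * n / 2)) ^ 2) : ℝ)

lemma real_key (x y : ℝ) :
    1 - 2 * Real.exp (-x) * Real.cos y + Real.exp (-x) ^ 2
      = Real.exp (-x) * (4 * (Real.sinh (x/2) ^ 2 + Real.sin (y/2) ^ 2)) := by
  have hcos : Real.cos y = 1 - 2 * Real.sin (y/2) ^ 2 := by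
    have h2 : (2:ℝ) * (y/2) = y := by ring
    have h3 := Real.cos_two_mul (y/2)
    rw [h2] at h3
    have hpy := Real.sin_sq_add_cos_sq (y/2)
    linarith [h3, hpy]
  have hsinh : Real.sinh (x/2) = (Real.exp (x/2) - Real.exp (-(x/2))) / 2 := Real.sinh_eq _
  have hE : Real.exp (-x) = Real.exp (-(x/2)) ^ 2 := by
    rw [sq, ← Real.exp_add]; ring_nf
  have hE2 : Real.exp (x/2) * Real.exp (-(x/2)) = 1 := by
    rw [← Real.exp_add]; simp
  rw [hcos, hsinh, hE]
  linear_combination (2 * Real.exp (-(x/2))^2 - Real.exp (x/2) * Real.exp (-(x/2)) - 1) * hE2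

lemma complex_key (x y : ℝ) :
    (1 - Complex.exp (-(x:ℂ) + (y:ℂ) * I)) * (1 - Complex.exp (-(x:ℂ) - (y:ℂ) * I))
      = ((1 - 2 * Real.exp (-x) * Real.cos y + Real.exp (-x) ^ 2 : ℝ) : ℂ) := by
  have h1 : Complex.exp (-(x:ℂ) + (y:ℂ) * I)
      = (Real.exp (-x) : ℂ) * ((Real.cos y : ℂ) + (Real.sin y : ℂ) * I) := by
    rw [Complex.exp_add, Complex.exp_mul_I]
    push_cast
    ring
  have h2 : Complex.exp (-(x:ℂ) - (y:ℂ) * I)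
      = (Real.exp (-x) : ℂ) * ((Real.cos y : ℂ) - (Real.sin y : ℂ) * I) := by
    rw [sub_eq_add_neg, Complex.exp_add, ← neg_mul, Complex.exp_mul_I]
    push_cast
    rw [Complex.cos_neg, Complex.sin_neg]
    ring
  have hsc : (Real.sin y : ℂ) ^ 2 + (Real.cos y : ℂ) ^ 2 = 1 := by
    norm_cast; exact Real.sin_sq_add_cos_sq y
  rw [h1, h2]
  push_cast [-Complex.ofReal_exp, -Complex.ofReal_cos, -Complex.ofReal_sin]
  linear_combination (2*((Real.exp (-x):ℂ))^2) * hsc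
    - (((Real.exp (-x):ℂ))^2 * ((Real.cos y:ℂ))^2 + 2*((Real.exp (-x):ℂ))^2 * ((Real.sin y:ℂ))^2) * Complex.I_sq
    + (((Real.exp (-x):ℂ))^2 * I^2) * hsc + ((Real.exp (-x):ℂ))^2 * Complex.I_sq

lemma full_key (x y : ℝ) :
    (1 - Complex.exp (-(x:ℂ) + (y:ℂ) * I)) * (1 - Complex.exp (-(x:ℂ) - (y:ℂ) * I))
      = Complex.exp (-(x:ℂ)) * ((4 * (Real.sinh (x/2) ^ 2 + Real.sin (y/2) ^ 2) : ℝ) : ℂ) := by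
  rw [complex_key, real_key, Complex.ofReal_mul, Complex.ofReal_exp, Complex.ofReal_neg]

set_option maxHeartbeats 2000000 in
/-- For `Re s > 0`, the series `∑_{n≥1} e^{−nα(s−1)}/(n(sinh²(αn/2)+sin²(βn/2)))`
converges absolutely and
`Z_Γ(s) = exp(−(1/4) ∑_{n≥1} e^{−nα(s−1)}/(n(sinh²(αn/2)+sin²(βn/2))))`. -/
theorem ZPS_log_formula (α β : ℝ) (hα : 0 < α) (s : ℂ) (hs : 0 < s.re) :
    (Summable fun n : ℕ =>
      ‖Complex.exp (-((n : ℂ) + 1) * (α : ℂ) * (s - 1)) / psDenom α β (n + 1)‖)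
    ∧ ZPS α β s
        = Complex.exp (-(1 / 4) *
            ∑' n : ℕ, Complex.exp (-((n : ℂ) + 1) * (α : ℂ) * (s - 1)) / psDenom α β (n + 1)) := by
  set q : ℝ := Real.exp (-α) with hqdef
  set ρ : ℝ := Real.exp (-(α * s.re)) with hρdef
  have hq0 : (0:ℝ) < q := Real.exp_pos _
  have hq1 : q < 1 := Real.exp_lt_one_iff.mpr (by linarith)
  have hρ0 : (0:ℝ) < ρ := Real.exp_pos _
  have hρ1 : ρ < 1 := Real.exp_lt_one_iff.mpr (by nlinarith)
  set A : ℂ := Complex.exp (Complex.I * β - α) with hAdef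
  set B : ℂ := Complex.exp (-(Complex.I * β) - α) with hBdef
  set C : ℂ := Complex.exp (-(s * α)) with hCdef
  set z : ℕ × ℕ → ℂ := fun k => A ^ k.1 * B ^ k.2 * C with hzdef
  have hnA : ‖A‖ = q := by
    rw [hAdef, Complex.norm_exp]
    simp [hqdef]
  have hnB : ‖B‖ = q := by
    rw [hBdef, Complex.norm_exp]
    simp [hqdef]
  have hnC : ‖C‖ = ρ := by
    rw [hCdef, Complex.norm_exp]
    simp [hρdef, mul_comm]
  have hnz : ∀ k : ℕ × ℕ, ‖z k‖ = q ^ k.1 * q ^ k.2 * ρ := by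
    intro k
    rw [hzdef]
    simp only [norm_mul, norm_pow, hnA, hnB, hnC]
  have hnzlt : ∀ k : ℕ × ℕ, ‖z k‖ < 1 := by
    intro k
    rw [hnz k]
    have h1 : q ^ k.1 ≤ 1 := pow_le_one₀ hq0.le hq1.le
    have h2 : q ^ k.2 ≤ 1 := pow_le_one₀ hq0.le hq1.le
    have h4 : (0:ℝ) ≤ q ^ k.2 := by positivity
    have h5 : q ^ k.1 * q ^ k.2 ≤ 1 := mul_le_one₀ h1 h4 h2
    calc q ^ k.1 * q ^ k.2 * ρ ≤ 1 * ρ := mul_le_mul_of_nonneg_right h5 hρ0.le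
      _ = ρ := one_mul ρ
      _ < 1 := hρ1
  have hne : ∀ k : ℕ × ℕ, 1 - z k ≠ 0 := by
    intro k h
    have h1 : z k = 1 := by linear_combination -h
    have h2 := hnzlt k
    rw [h1] at h2
    simp at h2
  -- powers of A, B
  have hApow : ∀ m : ℕ, A ^ m = Complex.exp (-((α*m : ℝ):ℂ) + ((β*m : ℝ):ℂ) * I) := by
    intro m
    rw [hAdef, ← Complex.exp_nat_mul]
    congr 1
    push_cast
    ring
  have hBpow : ∀ m : ℕ, B ^ m = Complex.exp (-((α*m : ℝ):ℂ) - ((β*m : ℝ):ℂ) * I) := by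
    intro m
    rw [hBdef, ← Complex.exp_nat_mul]
    congr 1
    push_cast
    ring
  have hkey : ∀ m : ℕ, (1 - A ^ m) * (1 - B ^ m)
      = Complex.exp (-((α*m : ℝ):ℂ)) *
        ((4 * (Real.sinh (α*m/2) ^ 2 + Real.sin (β*m/2) ^ 2) : ℝ) : ℂ) := by
    intro m
    rw [hApow m, hBpow m, full_key (α*m) (β*m)]
  -- the exchange family
  set F : ℕ × (ℕ × ℕ) → ℂ := fun p => z p.2 ^ p.1 / (p.1 : ℂ) with hFdef
  have hFbound : ∀ p : ℕ × (ℕ × ℕ), ‖F p‖ ≤ ρ ^ p.1 * (q ^ p.2.1 * q ^ p.2.2) := by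
    rintro ⟨n, k⟩
    rcases Nat.eq_zero_or_pos n with rfl | hn
    · simp [hFdef]
      positivity
    · have h1 : ‖F (n, k)‖ ≤ ‖z k‖ ^ n := by
        rw [hFdef]
        simp only [norm_div, norm_pow, Complex.norm_natCast]
        apply div_le_self (by positivity)
        exact_mod_cast hn
      refine h1.trans ?_
      rw [hnz k]
      have e1 : (q ^ k.1 * q ^ k.2 * ρ) ^ n = q ^ (k.1 * n) * q ^ (k.2 * n) * ρ ^ n := by
        rw [mul_pow, mul_pow, ← pow_mul, ← pow_mul]
      rw [e1]
      have h2 : q ^ (k.1 * n) ≤ q ^ k.1 :=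
        pow_le_pow_of_le_one hq0.le hq1.le (Nat.le_mul_of_pos_right _ hn)
      have h3 : q ^ (k.2 * n) ≤ q ^ k.2 :=
        pow_le_pow_of_le_one hq0.le hq1.le (Nat.le_mul_of_pos_right _ hn)
      have h5 : (0:ℝ) ≤ ρ ^ n := by positivity
      calc q ^ (k.1*n) * q ^ (k.2*n) * ρ ^ n ≤ q ^ k.1 * q ^ k.2 * ρ ^ n := by
            apply mul_le_mul _ le_rfl h5 (by positivity)
            exact mul_le_mul h2 h3 (by positivity) (by positivity)
        _ = ρ ^ n * (q ^ k.1 * q ^ k.2) := by ring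
  have hGsum : Summable fun p : ℕ × (ℕ × ℕ) => ρ ^ p.1 * (q ^ p.2.1 * q ^ p.2.2) :=
    (summable_geometric_of_lt_one hρ0.le hρ1).mul_of_nonneg
      ((summable_geometric_of_lt_one hq0.le hq1).mul_of_nonneg
        (summable_geometric_of_lt_one hq0.le hq1)
        (fun _ => by positivity) (fun _ => by positivity))
      (fun _ => by positivity) (fun _ => by positivity)
  have hFnorm : Summable fun p : ℕ × (ℕ × ℕ) => ‖F p‖ :=
    Summable.of_nonneg_of_le (fun p => norm_nonneg _) hFbound hGsum
  have hF : Summable F := hFnorm.of_norm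
  -- log expansion
  have hlog : ∀ k : ℕ × ℕ, Complex.log (1 - z k) = -∑' n : ℕ, F (n, k) := by
    intro k
    have h := (Complex.hasSum_taylorSeries_neg_log (hnzlt k)).tsum_eq
    simp only [hFdef]
    rw [h, neg_neg]
  have hslog : Summable fun k : ℕ × ℕ => Complex.log (1 - z k) := by
    apply Summable.congr (f := fun k : ℕ × ℕ => -∑' n : ℕ, F (n, k))
    · exact (hF.prod_symm.prod).neg
    · exact fun k => (hlog k).symm
  -- the infinite product
  have hfac : ∀ k : ℕ × ℕ,
      (1 - Complex.exp (Complex.I * β * k.1) * Complex.exp (-(Complex.I * β * k.2)) *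
        Complex.exp (-((k.1 : ℂ) + (k.2 : ℂ) + s) * α)) = 1 - z k := by
    intro k
    congr 1
    rw [hzdef]
    simp only [hAdef, hBdef, hCdef]
    rw [← Complex.exp_nat_mul, ← Complex.exp_nat_mul, ← Complex.exp_add, ← Complex.exp_add,
      ← Complex.exp_add, ← Complex.exp_add]
    congr 1
    ring
  have hZ : ZPS α β s = Complex.exp (∑' k : ℕ × ℕ, Complex.log (1 - z k)) := by
    have hP : HasProd (fun k : ℕ × ℕ => 1 - z k)
        (Complex.exp (∑' k : ℕ × ℕ, Complex.log (1 - z k))) := by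
      have hP0 := hslog.hasSum.cexp
      have he : (cexp ∘ fun k : ℕ × ℕ => Complex.log (1 - z k)) = fun k : ℕ × ℕ => 1 - z k :=
        funext fun k => Complex.exp_log (hne k)
      rw [he] at hP0
      exact hP0
    rw [ZPS, tprod_congr hfac, hP.tprod_eq]
  -- geometric double sums
  have hgz : ∀ m : ℕ, 0 < m → HasSum (fun k : ℕ × ℕ => z k ^ m)
      ((1 - A ^ m)⁻¹ * (1 - B ^ m)⁻¹ * C ^ m) := by
    intro m hm
    have hAm : ‖A ^ m‖ < 1 := by
      rw [norm_pow, hnA]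
      exact pow_lt_one₀ hq0.le hq1 hm.ne'
    have hBm : ‖B ^ m‖ < 1 := by
      rw [norm_pow, hnB]
      exact pow_lt_one₀ hq0.le hq1 hm.ne'
    have gA := hasSum_geometric_of_norm_lt_one hAm
    have gB := hasSum_geometric_of_norm_lt_one hBm
    have hsum : Summable fun k : ℕ × ℕ => (A ^ m) ^ k.1 * (B ^ m) ^ k.2 := by
      apply Summable.of_norm_bounded (g := fun k : ℕ × ℕ => ‖A ^ m‖ ^ k.1 * ‖B ^ m‖ ^ k.2)
        ((summable_geometric_of_lt_one (norm_nonneg _) hAm).mul_of_nonneg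
          (summable_geometric_of_lt_one (norm_nonneg _) hBm)
          (fun _ => by positivity) (fun _ => by positivity))
      intro k
      simp [norm_mul, norm_pow]
    have hh := (gA.mul gB hsum).mul_right (C ^ m)
    have he : (fun k : ℕ × ℕ => (A ^ m) ^ k.1 * (B ^ m) ^ k.2 * C ^ m)
        = fun k : ℕ × ℕ => z k ^ m := by
      funext k
      rw [hzdef]
      simp only
      rw [mul_pow, mul_pow, pow_right_comm A, pow_right_comm B]
    rw [he] at hh
    exact hh
  -- positivity of the denominator
  have hDpos : ∀ m : ℕ, 0 < m →
      0 < Real.sinh (α*m/2) ^ 2 + Real.sin (β*m/2) ^ 2 := by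
    intro m hm
    have h1 : 0 < Real.sinh (α*m/2) := Real.sinh_pos_iff.mpr (by positivity)
    positivity
  have hg : ∀ n : ℕ, (∑' k : ℕ × ℕ, F (n, k)) = (∑' k : ℕ × ℕ, z k ^ n) / (n : ℂ) := by
    intro n
    simp only [hFdef]
    exact tsum_div_const
  have hg0 : (∑' k : ℕ × ℕ, F (0, k)) = 0 := by
    rw [hg 0]
    simp
  have hterm : ∀ n : ℕ, (∑' k : ℕ × ℕ, F (n+1, k))
      = (1/4) * (Complex.exp (-((n : ℂ) + 1) * (α : ℂ) * (s - 1)) / psDenom α β (n + 1)) := by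
    intro n
    set m := n + 1 with hmdef
    have hm : 0 < m := Nat.succ_pos n
    rw [hg m, (hgz m hm).tsum_eq]
    have hCm : C ^ m = Complex.exp ((m : ℂ) * (-(s * α))) := by
      rw [hCdef, ← Complex.exp_nat_mul]
    have hmC : ((m : ℕ) : ℂ) ≠ 0 := Nat.cast_ne_zero.mpr hm.ne'
    have hD := hDpos m hm
    have hinv : (1 - A ^ m)⁻¹ * (1 - B ^ m)⁻¹
        = (Complex.exp (-((α*m : ℝ):ℂ)))⁻¹ *
          (((4 * (Real.sinh (α*m/2) ^ 2 + Real.sin (β*m/2) ^ 2) : ℝ) : ℂ))⁻¹ := by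
      rw [← mul_inv, hkey m, mul_inv]
    have hps : psDenom α β m
        = ((m : ℝ) : ℂ) * ((Real.sinh (α*m/2) ^ 2 + Real.sin (β*m/2) ^ 2 : ℝ) : ℂ) := by
      rw [psDenom]
      push_cast
      ring
    have hexp : Complex.exp (-((n : ℂ) + 1) * (α : ℂ) * (s - 1))
        = Complex.exp ((m : ℂ) * (-(s * α))) * Complex.exp (((α*m : ℝ):ℂ)) := by
      rw [← Complex.exp_add]
      congr 1
      push_cast [hmdef]
      ring
    rw [hinv, hCm, hexp, hps, Complex.exp_neg, inv_inv]
    have h4D : ((Real.sinh (α*(m:ℝ)/2) ^ 2 + Real.sin (β*(m:ℝ)/2) ^ 2 : ℝ) : ℂ) ≠ 0 := by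
      exact_mod_cast hD.ne'
    have hEne : Complex.exp (((α*m : ℝ):ℂ)) ≠ 0 := Complex.exp_ne_zero _
    push_cast
    push_cast at h4D hmC
    field_simp
  have hgsummable : Summable fun n : ℕ => ∑' k : ℕ × ℕ, F (n, k) := hF.prod
  have hcomm : ∑' k : ℕ × ℕ, ∑' n : ℕ, F (n, k) = ∑' n : ℕ, ∑' k : ℕ × ℕ, F (n, k) :=
    Summable.tsum_comm hF
  have hSlog : (∑' k : ℕ × ℕ, Complex.log (1 - z k))
      = -(∑' n : ℕ, ∑' k : ℕ × ℕ, F (n, k)) := by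
    calc ∑' k : ℕ × ℕ, Complex.log (1 - z k)
        = ∑' k : ℕ × ℕ, -∑' n : ℕ, F (n, k) := tsum_congr hlog
      _ = -∑' k : ℕ × ℕ, ∑' n : ℕ, F (n, k) := by rw [tsum_neg]
      _ = -(∑' n : ℕ, ∑' k : ℕ × ℕ, F (n, k)) := by rw [hcomm]
  have hzero : (∑' n : ℕ, ∑' k : ℕ × ℕ, F (n, k))
      = ∑' n : ℕ, ∑' k : ℕ × ℕ, F (n+1, k) := by
    rw [Summable.tsum_eq_zero_add hgsummable, hg0, zero_add]
  have hfinal : (∑' k : ℕ × ℕ, Complex.log (1 - z k))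
      = -(1/4) * ∑' n : ℕ, Complex.exp (-((n : ℂ) + 1) * (α : ℂ) * (s - 1)) /
          psDenom α β (n + 1) := by
    rw [hSlog, hzero, tsum_congr hterm, tsum_mul_left]
    ring
  constructor
  · rw [summable_norm_iff]
    have h1 : Summable fun n : ℕ => ∑' k : ℕ × ℕ, F (n+1, k) :=
      hgsummable.comp_injective (add_left_injective 1)
    have h2 := h1.mul_left (4 : ℂ)
    apply h2.congr
    intro n
    rw [hterm n]
    ring
  · rw [hZ, hfinal]
end

section
/- Let α > 0 and β ∈ ℝ. A complex number s is a zero of the Patterson–Selberg zeta function Z_{Γ} (i.e. Z_{Γ}(s) = 0) if and only if there exist k_1, k_2 ∈ ℕ and n ∈ ℤ such that s = −(k_1 + k_2) + i(k_1 − k_2)·(β/α) + 2πin/α. -/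
open Complex

/-- The zeros of the Patterson–Selberg zeta function are precisely the complex numbers
`s = −(k₁+k₂) + i(k₁−k₂)β/α + 2πin/α` with `k₁, k₂ ∈ ℕ`, `n ∈ ℤ`. -/
theorem ZPS_zero_iff (α β : ℝ) (hα : 0 < α) (s : ℂ) :
    ZPS α β s = 0 ↔
      ∃ k₁ k₂ : ℕ, ∃ n : ℤ,
        s = -((k₁ : ℂ) + (k₂ : ℂ)) + Complex.I * ((k₁ : ℂ) - (k₂ : ℂ)) * ((β : ℂ) / (α : ℂ))
            + 2 * (Real.pi : ℂ) * Complex.I * (n : ℂ) / (α : ℂ) := by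
  have hαne : (α : ℂ) ≠ 0 := Complex.ofReal_ne_zero.mpr hα.ne'
  set c : ℕ × ℕ → ℂ := fun k =>
    Complex.exp (Complex.I * β * k.1) * Complex.exp (-(Complex.I * β * k.2)) *
      Complex.exp (-((k.1 : ℂ) + (k.2 : ℂ) + s) * α) with hc
  have hcexp : ∀ k : ℕ × ℕ, c k = Complex.exp
      (Complex.I * β * k.1 - Complex.I * β * k.2 - ((k.1 : ℂ) + (k.2 : ℂ) + s) * α) := by
    intro k
    show Complex.exp (Complex.I * β * k.1) * Complex.exp (-(Complex.I * β * k.2)) *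
        Complex.exp (-((k.1 : ℂ) + (k.2 : ℂ) + s) * α) = _
    rw [← Complex.exp_add, ← Complex.exp_add]
    congr 1
    ring
  -- norm of c
  have hnorm : ∀ k : ℕ × ℕ,
      ‖c k‖ = Real.exp (-s.re * α) * Real.exp (-α) ^ k.1 * Real.exp (-α) ^ k.2 := by
    intro k
    rw [hcexp k, Complex.norm_exp, ← Real.exp_nat_mul, ← Real.exp_nat_mul,
      ← Real.exp_add, ← Real.exp_add]
    congr 1
    simp [Complex.add_re, Complex.mul_re, Complex.mul_im, Complex.sub_re]
    ring
  have hsum : Summable fun k : ℕ × ℕ => ‖c k‖ := by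
    have hr : Real.exp (-α) < 1 := Real.exp_lt_one_iff.mpr (by linarith)
    have hr0 : (0:ℝ) ≤ Real.exp (-α) := (Real.exp_pos _).le
    have h1 : Summable fun k : ℕ => Real.exp (-s.re * α) * Real.exp (-α) ^ k :=
      (summable_geometric_of_lt_one hr0 hr).mul_left _
    have h2 : Summable fun k : ℕ => Real.exp (-α) ^ k :=
      summable_geometric_of_lt_one hr0 hr
    have := h1.mul_of_nonneg h2
      (fun k => mul_nonneg (Real.exp_pos _).le (pow_nonneg hr0 k))
      (fun k => pow_nonneg hr0 k)
    refine this.congr fun k => ?_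
    rw [hnorm k]
  -- key equivalence: product is zero iff some factor is zero
  have hzero : ZPS α β s = 0 ↔ ∃ k : ℕ × ℕ, 1 - c k = 0 := by
    constructor
    · intro h
      by_contra hne
      push_neg at hne
      have hne' : ∀ k : ℕ × ℕ, 1 - c k ≠ 0 := hne
      -- summability of logs
      have hct : Filter.Tendsto c Filter.cofinite (nhds 0) :=
        hsum.of_norm.tendsto_cofinite_zero
      have hev : ∀ᶠ k in Filter.cofinite, ‖Complex.log (1 - c k)‖ ≤ 3 / 2 * ‖c k‖ := by
        filter_upwards [hct.eventually (Metric.ball_mem_nhds 0 one_half_pos)] with k hk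
        have hk' : ‖-c k‖ ≤ 1 / 2 := by
          rw [norm_neg]
          simpa [dist_eq_norm] using hk.le
        have := Complex.norm_log_one_add_half_le_self hk'
        simpa [sub_eq_add_neg] using this
      have hlog : Summable fun k : ℕ × ℕ => Complex.log (1 - c k) :=
        Summable.of_norm_bounded_eventually (hsum.mul_left (3 / 2)) hev
      have := Complex.cexp_tsum_eq_tprod (f := fun k => 1 - c k)
        (fun k => hne' k) hlog
      have hZ : ZPS α β s = Complex.exp (∑' k : ℕ × ℕ, Complex.log (1 - c k)) := by
        rw [ZPS]; exact this.symm
      exact Complex.exp_ne_zero _ (hZ ▸ h)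
    · rintro ⟨k₀, hk₀⟩
      have hp : HasProd (fun k : ℕ × ℕ => 1 - c k) 0 := by
        rw [HasProd, SummationFilter.unconditional_filter]
        have : ∀ᶠ t : Finset (ℕ × ℕ) in Filter.atTop,
            (∏ k ∈ t, (1 - c k)) = 0 := by
          filter_upwards [Filter.eventually_ge_atTop {k₀}] with t ht
          exact Finset.prod_eq_zero (ht (Finset.mem_singleton_self k₀)) hk₀
        exact Filter.Tendsto.congr' (Filter.EventuallyEq.symm this) tendsto_const_nhds
      rw [ZPS]
      exact hp.tprod_eq
  rw [hzero]
  constructor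
  · rintro ⟨k, hk⟩
    rw [hcexp k] at hk
    have h1 : Complex.exp (Complex.I * β * k.1 - Complex.I * β * k.2
        - ((k.1 : ℂ) + (k.2 : ℂ) + s) * α) = 1 := (sub_eq_zero.mp hk).symm
    obtain ⟨n, hn⟩ := Complex.exp_eq_one_iff.mp h1
    refine ⟨k.1, k.2, -n, ?_⟩
    push_cast
    field_simp
    linear_combination -hn
  · rintro ⟨k₁, k₂, n, hs⟩
    refine ⟨(k₁, k₂), ?_⟩
    rw [hcexp (k₁, k₂)]
    have : Complex.I * β * k₁ - Complex.I * β * k₂ - ((k₁ : ℂ) + (k₂ : ℂ) + s) * α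
        = (-n : ℤ) * (2 * Real.pi * Complex.I) := by
      push_cast
      field_simp at hs
      linear_combination -hs
    rw [this, Complex.exp_int_mul_two_pi_mul_I]
    ring
end

section
/- Let α > 0 and β ∈ ℝ. Then there exist constants C_1, C_2 > 0 such that for all s ∈ ℂ, |Z_{Γ}(s)| ≤ C_1 · exp( C_2 |s|³ ); in particular the Patterson–Selberg zeta function Z_{Γ} is an entire function of order at most three. -/
open Complex

set_option maxHeartbeats 1600000 in
/-- Growth estimate: there are constants `C₁, C₂ > 0` with
`|Z_Γ(s)| ≤ C₁ exp(C₂ |s|³)` for all `s ∈ ℂ`; i.e. `Z_Γ` has order at most three. -/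
theorem ZPS_growth_estimate (α β : ℝ) (hα : 0 < α) :
    ∃ C₁ C₂ : ℝ, 0 < C₁ ∧ 0 < C₂ ∧
      ∀ s : ℂ, ‖ZPS α β s‖ ≤ C₁ * Real.exp (C₂ * ‖s‖ ^ 3) := by
  have hlog2 : (0:ℝ) ≤ Real.log 2 := Real.log_nonneg (by norm_num)
  have heα : Real.exp (-α) < 1 := by
    rw [Real.exp_lt_one_iff]; linarith
  have heα0 : (0:ℝ) ≤ Real.exp (-α) := (Real.exp_pos _).le
  set A : ℝ := (1 - Real.exp (-α))⁻¹ with hAdef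
  have hApos : 0 < A := inv_pos.2 (by linarith)
  set K : ℝ := 4 * ((Real.log 2 + α + 1) * (1 + A) ^ 2) with hKdef
  have hKpos : 0 < K := by positivity
  refine ⟨Real.exp K, K, Real.exp_pos K, hKpos, ?_⟩
  intro s
  set f : ℕ × ℕ → ℂ := fun k =>
    1 - Complex.exp (Complex.I * β * k.1) * Complex.exp (-(Complex.I * β * k.2)) *
        Complex.exp (-((k.1 : ℂ) + (k.2 : ℂ) + s) * α) with hfdef
  have hZ : ZPS α β s = ∏' k, f k := rfl
  have hone_le : (1:ℝ) ≤ Real.exp K * Real.exp (K * ‖s‖ ^ 3) := by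
    have h1 : (1:ℝ) ≤ Real.exp K := Real.one_le_exp hKpos.le
    have h2 : (1:ℝ) ≤ Real.exp (K * ‖s‖ ^ 3) := Real.one_le_exp (by positivity)
    nlinarith
  by_cases hmul : Multipliable f
  swap
  · rw [hZ, tprod_eq_one_of_not_multipliable hmul, norm_one]
    exact hone_le
  -- main case
  set r : ℝ := max (-s.re) 0 with hrdef
  have hr0 : 0 ≤ r := le_max_right _ _
  have hrs : r ≤ ‖s‖ := by
    refine max_le ?_ (norm_nonneg s)
    calc -s.re ≤ |s.re| := neg_le_abs _
    _ ≤ ‖s‖ := Complex.abs_re_le_norm s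
  set N : ℕ := Nat.floor r + 1 with hNdef
  have hrN : r < N := by
    rw [hNdef]
    push_cast
    exact Nat.lt_floor_add_one r
  have hNr : (N:ℝ) ≤ 1 + r := by
    rw [hNdef]
    push_cast
    have := Nat.floor_le hr0
    linarith
  set u : ℕ → ℝ := fun j => Real.exp (-α * max ((j:ℝ) - N) 0) with hudef
  have hu_pos : ∀ j, 0 < u j := fun j => Real.exp_pos _
  have hu_one : ∀ j, j < N → u j = 1 := by
    intro j hj
    have : max ((j:ℝ) - N) 0 = 0 := by
      apply max_eq_right
      have : (j:ℝ) < N := by exact_mod_cast hj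
      linarith
    simp [hudef, this]
  have hu_shift : ∀ j : ℕ, u (j + N) = Real.exp (-α) ^ j := by
    intro j
    have h0 : (((j + N : ℕ) :ℝ) - N) = (j:ℝ) := by push_cast; ring
    have h1 : max (((j + N : ℕ) :ℝ) - N) 0 = (j:ℝ) := by
      rw [h0]; exact max_eq_left (Nat.cast_nonneg j)
    rw [hudef]
    simp only [h1]
    rw [← Real.exp_nat_mul]
    ring_nf
  have hu_sum : Summable u := by
    rw [← summable_nat_add_iff N]
    simp only [hu_shift]
    exact summable_geometric_of_lt_one heα0 heα
  have hu_tsum : ∑' j, u j = N + A := by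
    rw [← Summable.sum_add_tsum_nat_add N hu_sum]
    have h1 : ∑ j ∈ Finset.range N, u j = N := by
      rw [Finset.sum_congr rfl (fun j hj => hu_one j (Finset.mem_range.mp hj))]
      simp
    have h2 : ∑' j, u (j + N) = A := by
      simp only [hu_shift]
      rw [tsum_geometric_of_lt_one heα0 heα]
    rw [h1, h2]
  set g : ℕ × ℕ → ℝ := fun k =>
    Real.log (1 + Real.exp ((r - k.1 - k.2) * α)) with hgdef
  have hg_nonneg : ∀ k, 0 ≤ g k := fun k =>
    Real.log_nonneg (by nlinarith [Real.exp_pos ((r - k.1 - k.2) * α)])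
  set C : ℝ := (Real.log 2 + α + 1) * (1 + r) with hCdef
  have hC1 : 1 ≤ C := by nlinarith
  -- key pointwise bound
  have hkey : ∀ k : ℕ × ℕ, g k ≤ C * (u k.1 * u k.2) := by
    rintro ⟨k1, k2⟩
    simp only [hgdef]
    rcases le_or_gt ((k1:ℝ) + k2) r with hm | hm
    · have h1 : k1 < N := by
        have : (k1:ℝ) < N := by
          have : (0:ℝ) ≤ (k2:ℝ) := by positivity
          linarith
        exact_mod_cast this
      have h2 : k2 < N := by
        have : (k2:ℝ) < N := by
          have : (0:ℝ) ≤ (k1:ℝ) := by positivity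
          linarith
        exact_mod_cast this
      rw [hu_one k1 h1, hu_one k2 h2, mul_one, mul_one]
      have hb : (1:ℝ) + Real.exp ((r - k1 - k2) * α) ≤ 2 * Real.exp (r * α) := by
        have e1 : Real.exp ((r - k1 - k2) * α) ≤ Real.exp (r * α) := by
          apply Real.exp_le_exp.2
          have : (0:ℝ) ≤ (k1:ℝ) + k2 := by positivity
          nlinarith
        have e2 : (1:ℝ) ≤ Real.exp (r * α) := Real.one_le_exp (by positivity)
        linarith
      calc Real.log (1 + Real.exp ((r - k1 - k2) * α))
          ≤ Real.log (2 * Real.exp (r * α)) := by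
            apply Real.log_le_log (by positivity) hb
        _ = Real.log 2 + r * α := by
            rw [Real.log_mul (by norm_num) (Real.exp_pos _).ne', Real.log_exp]
        _ ≤ C := by rw [hCdef]; nlinarith
    · -- tail case
      have hx : 0 < Real.exp ((r - k1 - k2) * α) := Real.exp_pos _
      have hlog : Real.log (1 + Real.exp ((r - k1 - k2) * α))
          ≤ Real.exp ((r - k1 - k2) * α) := by
        have := Real.log_le_sub_one_of_pos (x := 1 + Real.exp ((r - k1 - k2) * α))
          (by linarith)
        linarith
      have huu : Real.exp ((r - k1 - k2) * α) ≤ u k1 * u k2 := by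
        rw [hudef]
        simp only
        rw [← Real.exp_add]
        apply Real.exp_le_exp.2
        have hk1 : (0:ℝ) ≤ (k1:ℝ) := Nat.cast_nonneg k1
        have hk2 : (0:ℝ) ≤ (k2:ℝ) := Nat.cast_nonneg k2
        have hM : max ((k1:ℝ) - N) 0 + max ((k2:ℝ) - N) 0 ≤ (k1:ℝ) + k2 - r := by
          rcases max_cases ((k1:ℝ) - N) 0 with ⟨e1, h1⟩ | ⟨e1, h1⟩ <;>
            rcases max_cases ((k2:ℝ) - N) 0 with ⟨e2, h2⟩ | ⟨e2, h2⟩ <;>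
            rw [e1, e2] <;> linarith
        have := mul_le_mul_of_nonneg_right hM hα.le
        linarith
      calc Real.log (1 + Real.exp ((r - k1 - k2) * α))
          ≤ Real.exp ((r - k1 - k2) * α) := hlog
        _ ≤ u k1 * u k2 := huu
        _ ≤ C * (u k1 * u k2) := by
            nlinarith [mul_pos (hu_pos k1) (hu_pos k2)]
  -- summability of the dominating function and of g
  have huu_sum : Summable (fun k : ℕ × ℕ => u k.1 * u k.2) :=
    hu_sum.mul_of_nonneg hu_sum (fun j => (hu_pos j).le) (fun j => (hu_pos j).le)
  have hG_sum : Summable (fun k : ℕ × ℕ => C * (u k.1 * u k.2)) := huu_sum.mul_left C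
  have hg_sum : Summable g := Summable.of_nonneg_of_le hg_nonneg hkey hG_sum
  -- the product of norms is at most exp of the sum of g
  have hpt : ∀ k : ℕ × ℕ, ‖f k‖ ≤ Real.exp (g k) := by
    rintro ⟨k1, k2⟩
    have hexp : Real.exp (g (k1, k2)) = 1 + Real.exp ((r - k1 - k2) * α) := by
      rw [hgdef]
      exact Real.exp_log (by positivity)
    rw [hexp, hfdef]
    simp only
    rw [← Complex.exp_add, ← Complex.exp_add]
    refine (norm_sub_le _ _).trans ?_
    rw [norm_one]
    have hre : (Complex.I * β * k1 + -(Complex.I * β * k2) +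
        -((k1 : ℂ) + (k2 : ℂ) + s) * α).re = -((k1 + k2 + s.re) * α) := by
      simp [Complex.add_re, Complex.mul_re, Complex.I_re, Complex.I_im, Complex.ofReal_re,
        Complex.ofReal_im, Complex.natCast_re, Complex.natCast_im]
      ring
    rw [Complex.norm_exp, hre]
    have : Real.exp (-((k1 + k2 + s.re) * α)) ≤ Real.exp ((r - k1 - k2) * α) := by
      apply Real.exp_le_exp.2
      have hsr : -s.re ≤ r := le_max_left _ _
      have h1 : -s.re - (k1:ℝ) - k2 ≤ r - (k1:ℝ) - k2 := by linarith
      have h2 := mul_le_mul_of_nonneg_right h1 hα.le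
      linarith
    linarith
  have hnorm : ‖∏' k, f k‖ ≤ Real.exp (∑' k, g k) := by
    rw [Multipliable.norm_tprod hmul]
    have h1 : HasProd (fun k => ‖f k‖) (∏' k, ‖f k‖) := hmul.norm.hasProd
    have h2 : HasProd (fun k => Real.exp (g k)) (Real.exp (∑' k, g k)) :=
      hg_sum.hasSum.rexp
    exact le_of_tendsto_of_tendsto' h1 h2 (fun F =>
      Finset.prod_le_prod (fun k _ => norm_nonneg _) (fun k _ => hpt k))
  -- bound the sum
  have htsum_uu : ∑' k : ℕ × ℕ, u k.1 * u k.2 = (∑' j, u j) * (∑' j, u j) := by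
    rw [Summable.tsum_prod' huu_sum (fun a => hu_sum.mul_left (u a))]
    simp_rw [tsum_mul_left]
    rw [tsum_mul_right]
  have hsum_bound : ∑' k, g k ≤ K + K * r ^ 3 := by
    have h1 : ∑' k, g k ≤ ∑' k : ℕ × ℕ, C * (u k.1 * u k.2) :=
      Summable.tsum_le_tsum hkey hg_sum hG_sum
    have h2 : ∑' k : ℕ × ℕ, C * (u k.1 * u k.2) = C * ((∑' j, u j) * (∑' j, u j)) := by
      rw [tsum_mul_left, htsum_uu]
    have h3 : ∑' j, u j ≤ (1 + A) * (1 + r) := by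
      rw [hu_tsum]; linarith [mul_nonneg hApos.le hr0]
    have h4 : 0 ≤ ∑' j, u j := tsum_nonneg (fun j => (hu_pos j).le)
    have h5 : C * ((∑' j, u j) * (∑' j, u j)) ≤ C * ((1 + A) * (1 + r)) ^ 2 := by
      have h7 := mul_le_mul h3 h3 h4 (by positivity)
      have hC0 : (0:ℝ) ≤ C := le_trans zero_le_one hC1
      have h8 : (∑' j, u j) * (∑' j, u j) ≤ ((1 + A) * (1 + r)) ^ 2 := by
        rw [sq]; exact h7
      exact mul_le_mul_of_nonneg_left h8 hC0
    have h6 : C * ((1 + A) * (1 + r)) ^ 2 ≤ K + K * r ^ 3 := by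
      have hcube : (1 + r) ^ 3 ≤ 4 * (1 + r ^ 3) := by nlinarith [sq_nonneg (1 - r)]
      have hP : (0:ℝ) ≤ (Real.log 2 + α + 1) * (1 + A) ^ 2 := by positivity
      calc C * ((1 + A) * (1 + r)) ^ 2
          = ((Real.log 2 + α + 1) * (1 + A) ^ 2) * (1 + r) ^ 3 := by rw [hCdef]; ring
        _ ≤ ((Real.log 2 + α + 1) * (1 + A) ^ 2) * (4 * (1 + r ^ 3)) :=
            mul_le_mul_of_nonneg_left hcube hP
        _ = K + K * r ^ 3 := by rw [hKdef]; ring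
    linarith
  -- conclude
  rw [hZ]
  calc ‖∏' k, f k‖ ≤ Real.exp (∑' k, g k) := hnorm
    _ ≤ Real.exp (K + K * r ^ 3) := Real.exp_le_exp.2 hsum_bound
    _ = Real.exp K * Real.exp (K * r ^ 3) := Real.exp_add _ _
    _ ≤ Real.exp K * Real.exp (K * ‖s‖ ^ 3) := by
        have h1 : r ^ 3 ≤ ‖s‖ ^ 3 := pow_le_pow_left₀ hr0 hrs 3
        have h2 := Real.exp_le_exp.2 (mul_le_mul_of_nonneg_left h1 hKpos.le)
        exact mul_le_mul_of_nonneg_left h2 (Real.exp_pos K).le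
end

section
/- (Jacobi–Trudi identity, bialternant form.) Let n ≥ 1, let x_1,…,x_n be elements of a commutative ring, and let λ = (λ_1 ≥ λ_2 ≥ ⋯ ≥ λ_n ≥ 0) be a partition with at most n parts. Then det( (x_i^{λ_j + n − j})_{1≤i,j≤n} ) = det( (x_i^{n−j})_{1≤i,j≤n} ) · det( (h_{λ_i − i + j}(x_1,…,x_n))_{1≤i,j≤n} ), where h_m is the complete homogeneous symmetric polynomial of degree m in x_1,…,x_n, with the conventions h_0 = 1 and h_m = 0 for m < 0. (Equivalently, the Schur function satisfies s_λ = det(h_{λ_i−i+j}) after dividing by the Vandermonde determinant.) -/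
open Finset

/-- Complete homogeneous symmetric polynomial `h_d` in the variables `z i`, `i : ι`. -/
noncomputable def hsymm {R : Type*} [CommRing R] {ι : Type*} [Fintype ι] [DecidableEq ι]
    (z : ι → R) (d : ℕ) : R :=
  ∑ t ∈ (Finset.univ : Finset ι).sym d, ((Sym.toMultiset t).map z).prod

/-- `h_m` extended to integer indices, with `h_m = 0` for `m < 0`. -/
noncomputable def hsymmInt {R : Type*} [CommRing R] {ι : Type*} [Fintype ι] [DecidableEq ι]
    (z : ι → R) (m : ℤ) : R :=
  if m < 0 then 0 else hsymm z m.toNat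

section aux
variable {R : Type*} [CommRing R] {ι : Type*} [Fintype ι] [DecidableEq ι] (z : ι → R)

/-- complete homogeneous over a finset of variables -/
noncomputable def HH (A : Finset ι) (d : ℕ) : R :=
  ∑ t ∈ A.sym d, ((Sym.toMultiset t).map z).prod

lemma HH_zero (A : Finset ι) : HH z A 0 = 1 := by
  rw [HH, Finset.sym_zero, Finset.sum_singleton]; rfl

lemma HH_insert {a : ι} {A : Finset ι} (h : a ∉ A) (d : ℕ) :
    HH z (insert a A) d = ∑ i ∈ Finset.range (d + 1), z a ^ i * HH z A (d - i) := by
  rw [HH, ← Finset.sum_coe_sort]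
  rw [← Equiv.sum_comp (Finset.symInsertEquiv h).symm
    (fun t : {x // x ∈ (insert a A).sym d} => (Multiset.map z ((t : Sym ι d) : Multiset ι)).prod)]
  rw [← Finset.univ_sigma_univ, Finset.sum_sigma]
  rw [← Fin.sum_univ_eq_sum_range (fun i => z a ^ i * HH z A (d - i)) (d + 1)]
  refine Finset.sum_congr rfl fun i _ => ?_
  rw [HH, Finset.mul_sum, ← Finset.sum_coe_sort (A.sym (d - (i : ℕ)))]
  refine Finset.sum_congr rfl fun m _ => ?_
  have : (Sym.toMultiset ((Finset.symInsertEquiv h).symm ⟨i, m⟩ : Sym ι d))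
      = Sym.toMultiset (m : Sym ι (d - i)) + Multiset.replicate i a := by
    simp [Finset.symInsertEquiv, Sym.coe_fill, Sym.coe_replicate]
  rw [this, Multiset.map_add, Multiset.prod_add, Multiset.map_replicate, Multiset.prod_replicate]
  ring

lemma HH_singleton (a : ι) (d : ℕ) : HH z {a} d = z a ^ d := by
  simp [HH, Finset.sym_singleton, Sym.coe_replicate]


/-- elementary symmetric over a finset of variables -/
noncomputable def ee (A : Finset ι) (s : ℕ) : R :=
  ∑ B ∈ A.powersetCard s, ∏ i ∈ B, z i

lemma ee_zero (A : Finset ι) : ee z A 0 = 1 := by simp [ee]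

lemma ee_eq_zero {A : Finset ι} {s : ℕ} (h : A.card < s) : ee z A s = 0 := by
  simp [ee, Finset.powersetCard_eq_empty.2 h]

lemma ee_insert {a : ι} {A : Finset ι} (h : a ∉ A) (s : ℕ) :
    ee z (insert a A) (s + 1) = ee z A (s + 1) + z a * ee z A s := by
  rw [ee, Finset.powersetCard_succ_insert h, Finset.sum_union, Finset.sum_image]
  · rw [ee, ee, Finset.mul_sum]
    congr 1
    refine Finset.sum_congr rfl fun B hB => ?_
    have haB : a ∉ B := fun hc => h ((Finset.mem_powersetCard.1 hB).1 hc)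
    rw [Finset.prod_insert haB]
  · intro B hB C hC hBC
    have haB : a ∉ B := fun hc => h ((Finset.mem_powersetCard.1 hB).1 hc)
    have haC : a ∉ C := fun hc => h ((Finset.mem_powersetCard.1 hC).1 hc)
    rw [← Finset.erase_insert haB, ← Finset.erase_insert haC, hBC]
  · rw [Finset.disjoint_right]
    rintro B hB hB'
    obtain ⟨C, hC, rfl⟩ := Finset.mem_image.1 hB
    have : a ∈ A := (Finset.mem_powersetCard.1 hB').1 (Finset.mem_insert_self a C)
    exact h this

/-- `HH` extended to integer indices -/
noncomputable def HHe (A : Finset ι) (m : ℤ) : R :=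
  if m < 0 then 0 else HH z A m.toNat

lemma HHe_natCast (A : Finset ι) (d : ℕ) : HHe z A (d : ℤ) = HH z A d := by
  simp [HHe]

lemma HHe_step {a : ι} {A : Finset ι} (h : a ∉ A) (d : ℤ) :
    HHe z A d = HHe z (insert a A) d - z a * HHe z (insert a A) (d - 1) := by
  rcases lt_or_ge d 0 with hd | hd
  · have hd1 : d - 1 < 0 := by omega
    simp [HHe, hd, hd1]
  · obtain ⟨e, rfl⟩ : ∃ e : ℕ, d = (e : ℤ) := ⟨d.toNat, by omega⟩
    cases e with
    | zero =>
      have : (0 : ℤ) - 1 < 0 := by norm_num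
      simp [HHe, this, HH_zero]
    | succ e =>
      have h1 : ((e + 1 : ℕ) : ℤ) - 1 = (e : ℤ) := by push_cast; ring
      rw [h1, HHe_natCast, HHe_natCast, HHe_natCast, HH_insert z h (e + 1), HH_insert z h e,
        Finset.sum_range_succ' (fun i => z a ^ i * HH z A (e + 1 - i)) (e + 1)]
      simp only [pow_zero, one_mul, Nat.sub_zero, Finset.mul_sum]
      have : ∀ i ∈ Finset.range (e + 1),
          z a ^ (i + 1) * HH z A (e + 1 - (i + 1)) = z a * (z a ^ i * HH z A (e - i)) := by
        intro i _
        rw [Nat.succ_sub_succ]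
        ring
      rw [Finset.sum_congr rfl this]
      ring

lemma key (k : ι) (A : Finset ι) : k ∉ A → ∀ m : ℕ,
    ∑ s ∈ Finset.range (A.card + 1),
      (-1 : R) ^ s * ee z A s * HHe z (insert k A) ((m : ℤ) - s) = z k ^ m := by
  induction A using Finset.induction_on with
  | empty =>
      intro _ m
      simp [ee_zero, HHe_natCast, HH_singleton]
  | @insert a A ha ih =>
      intro hk m
      have hka : k ≠ a := fun hh => hk (hh ▸ Finset.mem_insert_self a A)
      have hkA : k ∉ A := fun hh => hk (Finset.mem_insert_of_mem hh)
      have haK : a ∉ insert k A := by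
        simp only [Finset.mem_insert, not_or]
        exact ⟨Ne.symm hka, ha⟩
      have hcomm : insert k (insert a A) = insert a (insert k A) := Finset.insert_comm k a A
      set G : ℤ → R := fun d => HHe z (insert a (insert k A)) d with hGdef
      have hF : ∀ d : ℤ, HHe z (insert k A) d = G d - z a * G (d - 1) :=
        fun d => HHe_step z haK d
      have hcard : (insert a A).card = A.card + 1 := Finset.card_insert_of_notMem ha
      rw [hcard, hcomm]
      -- abbreviations
      set c := A.card with hc
      set u : ℕ → R := fun s => (-1 : R) ^ s * ee z A (s + 1) * G ((m : ℤ) - s - 1) with hu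
      set v : ℕ → R := fun s => (-1 : R) ^ s * ee z A s * (z a * G ((m : ℤ) - s - 1)) with hv
      have step1 : ∑ s ∈ Finset.range (c + 1 + 1),
            (-1 : R) ^ s * ee z (insert a A) s * G ((m : ℤ) - s)
          = (∑ s ∈ Finset.range (c + 1), (-(u s) - v s)) + G (m : ℤ) := by
        rw [Finset.sum_range_succ'
          (fun s => (-1 : R) ^ s * ee z (insert a A) s * G ((m : ℤ) - s)) (c + 1)]
        congr 1
        · refine Finset.sum_congr rfl fun s _ => ?_
          have harg : (m : ℤ) - ((s + 1 : ℕ) : ℤ) = (m : ℤ) - s - 1 := by push_cast; ring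
          rw [harg, ee_insert z ha s, hu, hv]
          ring
        · simp [ee_zero]
      have hext : ∑ s ∈ Finset.range (c + 1), u s = ∑ s ∈ Finset.range c, u s := by
        rw [Finset.sum_range_succ, hu]
        simp [ee_eq_zero z (Nat.lt_succ_self c)]
      have step2 : z k ^ m
          = (∑ s ∈ Finset.range c, -(u s)) + G (m : ℤ) - ∑ s ∈ Finset.range (c + 1), v s := by
        rw [← ih hkA m]
        have hterm : ∀ s ∈ Finset.range (c + 1),
            (-1 : R) ^ s * ee z A s * HHe z (insert k A) ((m : ℤ) - s)
            = (-1 : R) ^ s * ee z A s * G ((m : ℤ) - s) - v s := by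
          intro s _
          rw [hF ((m : ℤ) - s), hv]
          ring
        rw [Finset.sum_congr rfl hterm, Finset.sum_sub_distrib]
        congr 1
        rw [Finset.sum_range_succ'
          (fun s => (-1 : R) ^ s * ee z A s * G ((m : ℤ) - s)) c]
        congr 1
        · refine Finset.sum_congr rfl fun s _ => ?_
          have harg : (m : ℤ) - ((s + 1 : ℕ) : ℤ) = (m : ℤ) - s - 1 := by push_cast; ring
          rw [harg, hu]
          ring
        · simp [ee_zero]
      rw [step1, step2, Finset.sum_sub_distrib, Finset.sum_neg_distrib, hext,
        Finset.sum_neg_distrib]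
      ring

end aux

section main
variable {R : Type*} [CommRing R]

lemma hsymmInt_eq_HHe {ι : Type*} [Fintype ι] [DecidableEq ι] (z : ι → R) (d : ℤ) :
    hsymmInt z d = HHe z Finset.univ d := rfl

lemma hsymmInt_zero {ι : Type*} [Fintype ι] [DecidableEq ι] (z : ι → R) :
    hsymmInt z 0 = 1 := by
  rw [hsymmInt_eq_HHe]
  have : (0 : ℤ) = ((0 : ℕ) : ℤ) := rfl
  rw [this, HHe_natCast, HH_zero]

lemma hsymmInt_neg {ι : Type*} [Fintype ι] [DecidableEq ι] (z : ι → R) {d : ℤ} (hd : d < 0) :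
    hsymmInt z d = 0 := by
  rw [hsymmInt, if_pos hd]

lemma key_univ {n : ℕ} (hn : 1 ≤ n) (x : Fin n → R) (k : Fin n) (m : ℕ) :
    ∑ s ∈ Finset.range n,
      (-1 : R) ^ s * ee x (Finset.univ.erase k) s * hsymmInt x ((m : ℤ) - s) = x k ^ m := by
  have h1 : (Finset.univ.erase k).card + 1 = n := by
    rw [Finset.card_erase_of_mem (Finset.mem_univ k), Finset.card_univ, Fintype.card_fin]
    omega
  have h2 : insert k (Finset.univ.erase k) = (Finset.univ : Finset (Fin n)) :=
    Finset.insert_erase (Finset.mem_univ k)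
  have h3 := key x k (Finset.univ.erase k) (Finset.notMem_erase k _) m
  rw [h2, h1] at h3
  rw [← h3]
  refine Finset.sum_congr rfl fun s _ => ?_
  rw [hsymmInt_eq_HHe]

lemma matrix_mul_eq {n : ℕ} (hn : 1 ≤ n) (x : Fin n → R) (l : Fin n → ℕ) :
    (Matrix.of fun i j : Fin n =>
        hsymmInt x ((l i : ℤ) - ((i : ℕ) : ℤ) + ((j : ℕ) : ℤ))) *
      (Matrix.of fun j k : Fin n =>
        (-1 : R) ^ (n - 1 - (j : ℕ)) * ee x (Finset.univ.erase k) (n - 1 - (j : ℕ)))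
    = Matrix.of fun i k : Fin n => x k ^ (l i + (n - 1 - (i : ℕ))) := by
  ext i k
  rw [Matrix.mul_apply]
  simp only [Matrix.of_apply]
  set m : ℕ := l i + (n - 1 - (i : ℕ)) with hm
  set g : ℕ → R := fun j =>
    hsymmInt x ((l i : ℤ) - ((i : ℕ) : ℤ) + (j : ℤ)) *
      ((-1 : R) ^ (n - 1 - j) * ee x (Finset.univ.erase k) (n - 1 - j)) with hg
  have h1 : ∑ j : Fin n, hsymmInt x ((l i : ℤ) - ((i : ℕ) : ℤ) + ((j : ℕ) : ℤ)) *
      ((-1 : R) ^ (n - 1 - (j : ℕ)) * ee x (Finset.univ.erase k) (n - 1 - (j : ℕ)))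
      = ∑ j ∈ Finset.range n, g j := Fin.sum_univ_eq_sum_range g n
  rw [h1, ← Finset.sum_range_reflect g n, ← key_univ hn x k m]
  refine Finset.sum_congr rfl fun s hs => ?_
  have hs' : s < n := Finset.mem_range.1 hs
  have hi : (i : ℕ) < n := i.isLt
  have e1 : n - 1 - (n - 1 - s) = s := by omega
  have e2 : ((l i : ℤ) - ((i : ℕ) : ℤ) + ((n - 1 - s : ℕ) : ℤ)) = (m : ℤ) - s := by
    rw [hm]
    have c1 : ((n - 1 - s : ℕ) : ℤ) = (n : ℤ) - 1 - s := by omega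
    have c2 : ((l i + (n - 1 - (i : ℕ)) : ℕ) : ℤ) = (l i : ℤ) + ((n : ℤ) - 1 - (i : ℕ)) := by
      push_cast [Nat.cast_sub]
      omega
    rw [c1, c2]
    ring
  rw [hg]
  simp only []
  rw [e1, e2]
  ring

lemma det_eq {n : ℕ} (hn : 1 ≤ n) (x : Fin n → R) (l : Fin n → ℕ) :
    Matrix.det (Matrix.of fun i j : Fin n => x i ^ (l j + (n - 1 - (j : ℕ))))
      = Matrix.det (Matrix.of fun i j : Fin n =>
          hsymmInt x ((l i : ℤ) - ((i : ℕ) : ℤ) + ((j : ℕ) : ℤ)))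
        * Matrix.det (Matrix.of fun j k : Fin n =>
          (-1 : R) ^ (n - 1 - (j : ℕ)) * ee x (Finset.univ.erase k) (n - 1 - (j : ℕ))) := by
  rw [← Matrix.det_mul, matrix_mul_eq hn x l, ← Matrix.det_transpose]
  congr 1

end main

lemma detH0 {R : Type*} [CommRing R] {n : ℕ} (x : Fin n → R) :
    Matrix.det (Matrix.of fun i j : Fin n =>
      hsymmInt x (((0 : ℕ) : ℤ) - ((i : ℕ) : ℤ) + ((j : ℕ) : ℤ))) = 1 := by
  have htri : (Matrix.of fun i j : Fin n =>
      hsymmInt x (((0 : ℕ) : ℤ) - ((i : ℕ) : ℤ) + ((j : ℕ) : ℤ))).BlockTriangular id := by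
    intro i j hij
    have : (j : ℕ) < (i : ℕ) := hij
    refine hsymmInt_neg x ?_
    omega
  rw [Matrix.det_of_upperTriangular htri]
  refine Finset.prod_eq_one fun i _ => ?_
  have : ((0 : ℕ) : ℤ) - ((i : ℕ) : ℤ) + ((i : ℕ) : ℤ) = 0 := by ring
  simp only [Matrix.of_apply, this, hsymmInt_zero]

/-- Jacobi–Trudi identity in bialternant form: for a partition `λ` with at most `n` parts,
`det(x_i^{λ_j+n−j}) = det(x_i^{n−j}) · det(h_{λ_i−i+j}(x))`. -/
theorem jacobi_trudi
    (R : Type*) [CommRing R] (n : ℕ) (hn : 1 ≤ n) (x : Fin n → R)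
    (l : Fin n → ℕ) (hl : Antitone l) :
    Matrix.det (Matrix.of fun i j : Fin n => x i ^ (l j + (n - 1 - (j : ℕ))))
      = Matrix.det (Matrix.of fun i j : Fin n => x i ^ (n - 1 - (j : ℕ)))
        * Matrix.det (Matrix.of fun i j : Fin n =>
            hsymmInt x ((l i : ℤ) - ((i : ℕ) : ℤ) + ((j : ℕ) : ℤ))) := by
  have hmain := det_eq hn x l
  have h0 := det_eq hn x (fun _ => 0)
  simp only [zero_add] at h0
  rw [detH0 x, one_mul] at h0
  rw [hmain, ← h0, mul_comm]
end
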